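/- arXiv:2007.10874 — 4 statements merged into one kernel-verified Lean document; each statement's English description precedes it below -/
import Mathlib

section
/- Let X = (X_t)_{t in Z^m} be a stationary real-valued random field such that E[|X_0|^q] < infinity for some q > 1 and such that alpha_{infty,1}(h) -> 0 as h -> infinity (X is alpha_{infty,1}-mixing). Then X is theta-lex weakly dependent, i.e. theta(h) -> 0 as h -> infinity. -/
open MeasureTheory Filter Topology

noncomputable section

/-- Covariance of two real-valued random variables. -/
def cov {Ω : Type*} [MeasurableSpace Ω] (P : Measure Ω) (f g : Ω → ℝ) : ℝ :=
  (∫ ω, f ω * g ω ∂P) - (∫ ω, f ω ∂P) * (∫ ω, g ω ∂P)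

/-- Strict lexicographic order on `ℤ^m`. -/
def lexLt {m : ℕ} (y z : Fin m → ℤ) : Prop :=
  ∃ p : Fin m, (∀ q, q < p → y q = z q) ∧ y p < z p

/-- Lexicographic order (non-strict) on `ℤ^m`. -/
def lexLe {m : ℕ} (y z : Fin m → ℤ) : Prop := lexLt y z ∨ y = z

/-- The set `V_j^h = {s : s ≤_lex j and ‖j - s‖_∞ ≥ h}`; the norm on `Fin m → ℤ` is
the sup norm. -/
def VSet {m : ℕ} (j : Fin m → ℤ) (h : ℝ) : Set (Fin m → ℤ) :=
  {s | lexLe s j ∧ h ≤ ‖j - s‖}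

/-- Strict stationarity of a random field indexed by `ℤ^m`. -/
def Stationary {Ω : Type*} [MeasurableSpace Ω] (P : Measure Ω) {m : ℕ}
    (X : (Fin m → ℤ) → Ω → ℝ) : Prop :=
  ∀ (τ : Fin m → ℤ) (u : ℕ) (t : Fin u → (Fin m → ℤ)),
    Measure.map (fun ω (i : Fin u) => X (t i + τ) ω) P =
      Measure.map (fun ω (i : Fin u) => X (t i) ω) P

/-- The σ-algebra generated by the random variables `X s`, `s ∈ S`. -/
def sigmaOn {Ω : Type*} [MeasurableSpace Ω] {I : Type*} (X : I → Ω → ℝ) (S : Set I) :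
    MeasurableSpace Ω :=
  ⨆ s ∈ S, MeasurableSpace.comap (X s) inferInstance

/-- Rosenblatt's strong mixing coefficient of two sub-σ-algebras. -/
def alphaOf {Ω : Type*} [MeasurableSpace Ω] (P : Measure Ω)
    (M N : MeasurableSpace Ω) : ℝ :=
  sSup {r | ∃ A B : Set Ω, MeasurableSet[M] A ∧ MeasurableSet[N] B ∧
    r = |(P A).toReal * (P B).toReal - (P (A ∩ B)).toReal|}

/-- The strong mixing coefficient `α_{∞,1}(h)` of a random field on `ℤ^m`. -/
def alphaInfOne {Ω : Type*} [MeasurableSpace Ω] (P : Measure Ω) {m : ℕ}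
    (X : (Fin m → ℤ) → Ω → ℝ) (h : ℝ) : ℝ :=
  sSup {r | ∃ (Γ : Finset (Fin m → ℤ)) (j : Fin m → ℤ),
    (∀ i ∈ Γ, h ≤ ‖i - j‖) ∧
    r = alphaOf P (sigmaOn X (Γ : Set (Fin m → ℤ))) (sigmaOn X {j})}

/-- `θ : ℝ → ℝ` is a family of θ-lex coefficients for the random field `X`. -/
def HasThetaLexBound {Ω : Type*} [MeasurableSpace Ω] (P : Measure Ω) {m : ℕ}
    (X : (Fin m → ℤ) → Ω → ℝ) (θ : ℝ → ℝ) : Prop :=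
  ∀ (h : ℝ), 0 < h → ∀ (u : ℕ) (j : Fin m → ℤ) (Γ : Fin u → (Fin m → ℤ)),
    Function.Injective Γ → (∀ i, Γ i ∈ VSet j h) →
    ∀ (F : (Fin u → ℝ) → ℝ) (G : ℝ → ℝ) (MF LG : ℝ),
      Measurable F → (∀ x, |F x| ≤ MF) →
      Measurable G → (∃ MG, ∀ x, |G x| ≤ MG) →
      (∀ x y, |G x - G y| ≤ LG * |x - y|) →
      |cov P (fun ω => F (fun i => X (Γ i) ω)) (fun ω => G (X j ω))| ≤ θ h * MF * LG

/-- A random field is θ-lex weakly dependent if it admits a family of θ-lex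
coefficients converging to `0` at infinity. -/
def ThetaLexWeaklyDependent {Ω : Type*} [MeasurableSpace Ω] (P : Measure Ω) {m : ℕ}
    (X : (Fin m → ℤ) → Ω → ℝ) : Prop :=
  ∃ θ : ℝ → ℝ, Tendsto θ atTop (𝓝 0) ∧ HasThetaLexBound P X θ

section Aux

variable {Ω : Type*} [MeasurableSpace Ω] {P : Measure Ω}

lemma integrable_of_bdd [IsFiniteMeasure P] {f : Ω → ℝ} (hf : Measurable f)
    {C : ℝ} (hC : ∀ ω, |f ω| ≤ C) : Integrable f P :=
  ⟨hf.aestronglyMeasurable,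
    HasFiniteIntegral.of_bounded (C := C) (ae_of_all _ (by simpa [Real.norm_eq_abs] using hC))⟩

lemma cov_comm (f g : Ω → ℝ) : cov P f g = cov P g f := by
  simp only [cov, mul_comm]

lemma abs_integral_le {f : Ω → ℝ} : |∫ ω, f ω ∂P| ≤ ∫ ω, |f ω| ∂P := by
  simpa [Real.norm_eq_abs] using norm_integral_le_integral_norm (μ := P) f

/-- Key half of the covariance inequality. -/
lemma key_cov {Ω : Type*} {M : MeasurableSpace Ω} [mΩ : MeasurableSpace Ω]
    {P : Measure Ω} [IsProbabilityMeasure P] (hm : M ≤ mΩ)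
    {F H : Ω → ℝ} {MF MH : ℝ} (hMF : 0 ≤ MF)
    (hF : Measurable[M] F) (hFb : ∀ ω, |F ω| ≤ MF)
    (hH : Measurable H) (hHb : ∀ ω, |H ω| ≤ MH) :
    ∃ A : Set Ω, MeasurableSet[M] A ∧
      |cov P F H| ≤ 2 * MF * |cov P (A.indicator fun _ => (1 : ℝ)) H| := by
  have hHint : Integrable H P := integrable_of_bdd hH hHb
  set c := ∫ ω, H ω ∂P with hc
  set ξ : Ω → ℝ := fun ω => (P[H|M]) ω - c with hξdef
  have hξm : Measurable[M] ξ := (stronglyMeasurable_condExp.measurable).sub measurable_const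
  have hξint : Integrable ξ P := integrable_condExp.sub (integrable_const c)
  have hξ0 : ∫ ω, ξ ω ∂P = 0 := by
    rw [hξdef]
    rw [integral_sub integrable_condExp (integrable_const c), integral_condExp hm,
      integral_const]
    simp [hc]
  set A : Set Ω := ξ ⁻¹' Set.Ici (0 : ℝ) with hAdef
  have hAm : MeasurableSet[M] A := hξm measurableSet_Ici
  have hAm0 : MeasurableSet A := hm A hAm
  have hFm0 : Measurable F := hF.mono hm le_rfl
  have hFint : Integrable F P := integrable_of_bdd hFm0 hFb
  have hFbn : ∀ ω, ‖F ω‖ ≤ MF := by simpa [Real.norm_eq_abs] using hFb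
  have hFHint : Integrable (F * H) P := hHint.bdd_mul hFm0.aestronglyMeasurable (ae_of_all _ hFbn)
  have hFceint : Integrable (fun ω => F ω * (P[H|M]) ω) P :=
    integrable_condExp.bdd_mul hFm0.aestronglyMeasurable (ae_of_all _ hFbn)
  have hFξint : Integrable (fun ω => F ω * ξ ω) P :=
    hξint.bdd_mul hFm0.aestronglyMeasurable (ae_of_all _ hFbn)
  -- step 1 : cov P F H = ∫ F ξ
  have h1 : ∫ ω, F ω * H ω ∂P = ∫ ω, F ω * (P[H|M]) ω ∂P := by
    have hpull := condExp_mul_of_stronglyMeasurable_left (μ := P) hF.stronglyMeasurable hFHint hHint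
    have := integral_condExp (μ := P) hm (f := F * H)
    rw [show ∫ ω, F ω * H ω ∂P = ∫ ω, (F * H) ω ∂P from rfl, ← this,
      integral_congr_ae hpull]
    simp [Pi.mul_apply]
  have hcov1 : cov P F H = ∫ ω, F ω * ξ ω ∂P := by
    have : (fun ω => F ω * ξ ω) = fun ω => F ω * (P[H|M]) ω - F ω * c := by
      funext ω; rw [hξdef]; ring
    rw [cov, h1, this, integral_sub hFceint (hFint.mul_const c), integral_mul_const]
  -- step 2 : ∫ |ξ| = 2 ∫_A ξ
  have hsplit : ∫ ω, |ξ ω| ∂P = 2 * ∫ ω in A, ξ ω ∂P := by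
    have h2 : ∫ ω in A, |ξ ω| ∂P = ∫ ω in A, ξ ω ∂P :=
      setIntegral_congr_fun hAm0 fun ω hω => abs_of_nonneg hω
    have h3 : ∫ ω in Aᶜ, |ξ ω| ∂P = ∫ ω in Aᶜ, -ξ ω ∂P :=
      setIntegral_congr_fun hAm0.compl fun ω hω =>
        abs_of_neg (by simpa [hAdef] using hω)
    have h4 := integral_add_compl hAm0 hξint.abs
    have h5 := integral_add_compl hAm0 hξint
    rw [h2, h3, integral_neg] at h4
    rw [hξ0] at h5
    simp only [hξdef] at h4 h5 ⊢
    linarith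
  -- step 3 : ∫_A ξ = cov P 1_A H
  have hind : cov P (A.indicator fun _ => (1 : ℝ)) H = ∫ ω in A, ξ ω ∂P := by
    have hiA : ∫ ω, A.indicator (fun _ => (1 : ℝ)) ω ∂P = (P A).toReal := by
      exact integral_indicator_one (μ := P) hAm0
    have hiAH : ∫ ω, A.indicator (fun _ => (1 : ℝ)) ω * H ω ∂P = ∫ ω in A, H ω ∂P := by
      rw [← integral_indicator hAm0]
      congr 1; funext ω
      by_cases hω : ω ∈ A <;> simp [hω]
    have hcA : ∫ ω in A, ξ ω ∂P = (∫ ω in A, H ω ∂P) - (P A).toReal * c := by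
      rw [hξdef]
      rw [integral_sub integrable_condExp.integrableOn (integrable_const c).integrableOn,
        setIntegral_condExp hm hHint hAm, setIntegral_const]
      simp [mul_comm, Measure.real]
    rw [cov, hiA, hiAH, hcA]
  refine ⟨A, hAm, ?_⟩
  have hAξnn : 0 ≤ ∫ ω in A, ξ ω ∂P := by
    have := hsplit
    have h6 : 0 ≤ ∫ ω, |ξ ω| ∂P := integral_nonneg fun ω => abs_nonneg _
    linarith
  calc |cov P F H| = |∫ ω, F ω * ξ ω ∂P| := by rw [hcov1]
    _ ≤ ∫ ω, |F ω * ξ ω| ∂P := abs_integral_le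
    _ ≤ ∫ ω, MF * |ξ ω| ∂P := by
        refine integral_mono hFξint.abs (hξint.abs.const_mul MF) fun ω => ?_
        rw [abs_mul]
        exact mul_le_mul_of_nonneg_right (hFb ω) (abs_nonneg _)
    _ = MF * ∫ ω, |ξ ω| ∂P := integral_const_mul MF _
    _ = 2 * MF * (∫ ω in A, ξ ω ∂P) := by rw [hsplit]; ring
    _ ≤ 2 * MF * |cov P (A.indicator fun _ => (1 : ℝ)) H| := by
        rw [hind]
        exact mul_le_mul_of_nonneg_left (le_abs_self _) (by positivity)


lemma prob_toReal_le_one {Ω : Type*} [mΩ : MeasurableSpace Ω] {P : Measure Ω}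
    [IsProbabilityMeasure P] (A : Set Ω) : (P A).toReal ≤ 1 := by
  have h := prob_le_one (μ := P) (s := A)
  simpa using ENNReal.toReal_mono ENNReal.one_ne_top h

lemma alphaOf_bddAbove {Ω : Type*} (M N : MeasurableSpace Ω) [mΩ : MeasurableSpace Ω]
    (P : Measure Ω) [IsProbabilityMeasure P] :
    ∀ r ∈ {r | ∃ A B : Set Ω, MeasurableSet[M] A ∧ MeasurableSet[N] B ∧
      r = |(P A).toReal * (P B).toReal - (P (A ∩ B)).toReal|}, r ≤ 1 := by
  rintro r ⟨A, B, hA, hB, rfl⟩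
  have h1 : (0:ℝ) ≤ (P A).toReal := ENNReal.toReal_nonneg
  have h2 : (0:ℝ) ≤ (P B).toReal := ENNReal.toReal_nonneg
  have h3 : (0:ℝ) ≤ (P (A ∩ B)).toReal := ENNReal.toReal_nonneg
  have h4 := prob_toReal_le_one (P := P) A
  have h5 := prob_toReal_le_one (P := P) B
  have h6 := prob_toReal_le_one (P := P) (A ∩ B)
  rw [abs_le]
  constructor <;> nlinarith

lemma abs_le_alphaOf {Ω : Type*} (M N : MeasurableSpace Ω) [mΩ : MeasurableSpace Ω]
    (P : Measure Ω) [IsProbabilityMeasure P] {A B : Set Ω}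
    (hA : MeasurableSet[M] A) (hB : MeasurableSet[N] B) :
    |(P A).toReal * (P B).toReal - (P (A ∩ B)).toReal| ≤ alphaOf P M N :=
  le_csSup ⟨1, alphaOf_bddAbove M N P⟩ ⟨A, B, hA, hB, rfl⟩

lemma alphaOf_le_one {Ω : Type*} (M N : MeasurableSpace Ω) [mΩ : MeasurableSpace Ω]
    (P : Measure Ω) [IsProbabilityMeasure P] : alphaOf P M N ≤ 1 := by
  refine csSup_le ⟨0, ∅, ∅, @MeasurableSet.empty Ω M,
    @MeasurableSet.empty Ω N, by simp⟩
    (alphaOf_bddAbove M N P)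

lemma alphaOf_nonneg {Ω : Type*} (M N : MeasurableSpace Ω) [mΩ : MeasurableSpace Ω]
    (P : Measure Ω) [IsProbabilityMeasure P] : 0 ≤ alphaOf P M N := by
  have := abs_le_alphaOf M N P (A := ∅) (B := ∅)
    (@MeasurableSet.empty Ω M) (@MeasurableSet.empty Ω N)
  simpa using this

/-- The covariance inequality for strongly mixing σ-algebras. -/
lemma cov_abs_le_alpha {Ω : Type*} {M N : MeasurableSpace Ω} [mΩ : MeasurableSpace Ω]
    {P : Measure Ω} [IsProbabilityMeasure P] (hm : M ≤ mΩ) (hn : N ≤ mΩ)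
    {F H : Ω → ℝ} {MF MH : ℝ} (hMF : 0 ≤ MF) (hMH : 0 ≤ MH)
    (hF : Measurable[M] F) (hFb : ∀ ω, |F ω| ≤ MF)
    (hH : Measurable[N] H) (hHb : ∀ ω, |H ω| ≤ MH) :
    |cov P F H| ≤ 4 * MF * MH * alphaOf P M N := by
  obtain ⟨A, hAm, h1⟩ := key_cov (P := P) hm hMF hF hFb (hH.mono hn le_rfl) hHb
  set iA := A.indicator fun _ => (1:ℝ) with hiAdef
  have hiAmeas : Measurable iA := measurable_const.indicator (hm A hAm)
  have hiAb : ∀ ω, |iA ω| ≤ 1 := fun ω => by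
    by_cases hω : ω ∈ A <;> simp [hiAdef, hω]
  obtain ⟨B, hBm, h2⟩ := key_cov (P := P) hn hMH hH hHb hiAmeas hiAb
  set iB := B.indicator fun _ => (1:ℝ) with hiBdef
  have hBm0 : MeasurableSet B := hn B hBm
  have hAm0 : MeasurableSet A := hm A hAm
  have hcovind : cov P iB iA = (P (B ∩ A)).toReal - (P B).toReal * (P A).toReal := by
    have h4 : (fun ω => iB ω * iA ω) = (B ∩ A).indicator (fun _ => (1:ℝ)) := by
      funext ω
      by_cases hB' : ω ∈ B <;> by_cases hA' : ω ∈ A <;>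
        simp [hiBdef, hiAdef, hB', hA', Set.indicator, Set.mem_inter_iff]
    have e1 : ∫ ω, iB ω * iA ω ∂P = (P (B ∩ A)).toReal := by
      rw [h4]; exact integral_indicator_one (hBm0.inter hAm0)
    have e2 : ∫ ω, iB ω ∂P = (P B).toReal := integral_indicator_one hBm0
    have e3 : ∫ ω, iA ω ∂P = (P A).toReal := integral_indicator_one hAm0
    rw [cov, e1, e2, e3]
  have h5 : |cov P iB iA| ≤ alphaOf P M N := by
    rw [hcovind]
    have h6 := abs_le_alphaOf M N P hAm hBm
    calc |(P (B ∩ A)).toReal - (P B).toReal * (P A).toReal|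
        = |(P A).toReal * (P B).toReal - (P (A ∩ B)).toReal| := by
          rw [abs_sub_comm, Set.inter_comm, mul_comm]
      _ ≤ alphaOf P M N := h6
  have hcc : cov P iA H = cov P H iA := cov_comm _ _
  calc |cov P F H| ≤ 2 * MF * |cov P iA H| := h1
    _ = 2 * MF * |cov P H iA| := by rw [hcc]
    _ ≤ 2 * MF * (2 * MH * |cov P iB iA|) := by
        exact mul_le_mul_of_nonneg_left h2 (by positivity)
    _ ≤ 2 * MF * (2 * MH * alphaOf P M N) := by
        refine mul_le_mul_of_nonneg_left ?_ (by positivity)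
        exact mul_le_mul_of_nonneg_left h5 (by positivity)
    _ = 4 * MF * MH * alphaOf P M N := by ring


lemma cov_sub_const {Ω : Type*} [mΩ : MeasurableSpace Ω] {P : Measure Ω}
    [IsProbabilityMeasure P] {f g : Ω → ℝ} (hf : Integrable f P) (hg : Integrable g P)
    (hfg : Integrable (fun ω => f ω * g ω) P) (c : ℝ) :
    cov P f (fun ω => g ω - c) = cov P f g := by
  have h1 : (fun ω => f ω * (g ω - c)) = fun ω => f ω * g ω - f ω * c := by
    funext ω; ring
  rw [cov, cov]
  show (∫ ω, f ω * (g ω - c) ∂P) - _ = _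
  rw [h1, integral_sub hfg (hf.mul_const c),
    integral_sub hg (integrable_const c), integral_mul_const, integral_const]
  have h2 : P.real Set.univ = 1 := by simp
  rw [h2]; simp only [smul_eq_mul, one_mul]; ring

lemma cov_decomp {Ω : Type*} [mΩ : MeasurableSpace Ω] {P : Measure Ω}
    [IsProbabilityMeasure P] {f g h : Ω → ℝ} (hf : Integrable f P) (hg : Integrable g P)
    (hh : Integrable h P) (hfg : Integrable (fun ω => f ω * g ω) P)
    (hfh : Integrable (fun ω => f ω * h ω) P) :
    cov P f g = cov P f h + cov P f (fun ω => g ω - h ω) := by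
  have h1 : (fun ω => f ω * (g ω - h ω)) = fun ω => f ω * g ω - f ω * h ω := by
    funext ω; ring
  have h2 : (∫ ω, f ω * (g ω - h ω) ∂P) = (∫ ω, f ω * g ω ∂P) - ∫ ω, f ω * h ω ∂P := by
    rw [h1, integral_sub hfg hfh]
  have h3 : (∫ ω, (g ω - h ω) ∂P) = (∫ ω, g ω ∂P) - ∫ ω, h ω ∂P := integral_sub hg hh
  simp only [cov, h2, h3]
  ring

lemma cov_abs_le_two_mul {Ω : Type*} [mΩ : MeasurableSpace Ω] {P : Measure Ω}
    [IsProbabilityMeasure P] {f R : Ω → ℝ} {C : ℝ}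
    (hC : 0 ≤ C) (hf : Measurable f) (hfb : ∀ ω, |f ω| ≤ C) (hR : Integrable R P) :
    |cov P f R| ≤ 2 * C * ∫ ω, |R ω| ∂P := by
  have hfR : Integrable (fun ω => f ω * R ω) P :=
    hR.bdd_mul hf.aestronglyMeasurable (ae_of_all _ (by simpa [Real.norm_eq_abs] using hfb))
  have a1 : |∫ ω, f ω * R ω ∂P| ≤ ∫ ω, C * |R ω| ∂P := by
    refine le_trans abs_integral_le ?_
    refine integral_mono hfR.abs (hR.abs.const_mul C) fun ω => ?_
    rw [abs_mul]
    exact mul_le_mul_of_nonneg_right (hfb ω) (abs_nonneg _)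
  have a3 : |∫ ω, f ω ∂P| ≤ C := by
    refine le_trans abs_integral_le ?_
    calc ∫ ω, |f ω| ∂P ≤ ∫ _ω, C ∂P :=
          integral_mono (integrable_of_bdd hf hfb).abs (integrable_const C) hfb
      _ = C := by simp
  have a4 : |∫ ω, R ω ∂P| ≤ ∫ ω, |R ω| ∂P := abs_integral_le
  have a5 : (0:ℝ) ≤ ∫ ω, |R ω| ∂P := integral_nonneg fun ω => abs_nonneg _
  calc |cov P f R| ≤ |∫ ω, f ω * R ω ∂P| + |(∫ ω, f ω ∂P) * ∫ ω, R ω ∂P| := abs_sub _ _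
    _ ≤ C * (∫ ω, |R ω| ∂P) + C * (∫ ω, |R ω| ∂P) := by
        rw [integral_const_mul] at a1
        rw [abs_mul]
        exact add_le_add a1 (mul_le_mul a3 a4 (abs_nonneg _) hC)
    _ = 2 * C * ∫ ω, |R ω| ∂P := by ring


/-- truncation map -/
def phiT (T x : ℝ) : ℝ := max (-T) (min x T)

lemma phiT_measurable (T : ℝ) : Measurable (phiT T) :=
  measurable_const.max (measurable_id.min measurable_const)

lemma phiT_zero {T : ℝ} (hT : 0 ≤ T) : phiT T 0 = 0 := by
  unfold phiT
  rw [min_eq_left hT, max_eq_right (neg_nonpos.mpr hT)]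

lemma phiT_abs_le {T : ℝ} (hT : 0 ≤ T) (x : ℝ) : |phiT T x| ≤ T := by
  rw [abs_le]
  exact ⟨le_max_left _ _, max_le (by linarith) (min_le_right _ _)⟩

lemma phiT_lip (T x y : ℝ) : |phiT T x - phiT T y| ≤ |x - y| := by
  unfold phiT
  rw [max_comm (-T) (min x T), max_comm (-T) (min y T)]
  refine le_trans (abs_max_sub_max_le_abs _ _ _) ?_
  refine le_trans (abs_min_sub_min_le_max _ _ _ _) ?_
  simp

lemma phiT_eq_self {T x : ℝ} (h : |x| ≤ T) : phiT T x = x := by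
  rw [abs_le] at h
  unfold phiT
  rw [min_eq_left h.2, max_eq_right h.1]

lemma phiT_diff_le {T x : ℝ} (hT : 0 < T) {q : ℝ} (hq : 1 < q) :
    |x - phiT T x| ≤ |x| ^ q / T ^ (q - 1) := by
  have hTq : (0:ℝ) < T ^ (q - 1) := Real.rpow_pos_of_pos hT _
  by_cases h : |x| ≤ T
  · rw [phiT_eq_self h, sub_self, abs_zero]
    positivity
  · push_neg at h
    have hx0 : 0 < |x| := lt_trans hT h
    have h1 : |x - phiT T x| ≤ |x| := by
      rcases le_or_gt x T with hxT | hxT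
      · have hx : x < -T := by
          rcases abs_cases x with ⟨he, _⟩ | ⟨he, _⟩
          · linarith [he ▸ h]
          · linarith [he ▸ h]
        have : phiT T x = -T := by
          unfold phiT
          rw [min_eq_left hxT, max_eq_left (by linarith)]
        rw [this]
        rw [abs_of_nonpos (by linarith), abs_of_nonpos (by linarith)]
        linarith
      · have : phiT T x = T := by
          unfold phiT
          rw [min_eq_right (le_of_lt hxT), max_eq_right (by linarith)]
        rw [this, abs_of_nonneg (by linarith), abs_of_nonneg (by linarith)]
        linarith
    refine le_trans h1 ?_
    rw [le_div_iff₀ hTq]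
    have h2 : T ^ (q - 1) ≤ |x| ^ (q - 1) :=
      Real.rpow_le_rpow (le_of_lt hT) (le_of_lt h) (by linarith)
    have h3 : |x| ^ q = |x| * |x| ^ (q - 1) := by
      rw [show q = 1 + (q - 1) by ring, Real.rpow_add hx0, Real.rpow_one]
      ring_nf
    rw [h3]
    exact mul_le_mul_of_nonneg_left h2 (abs_nonneg _)

end Aux

/-- Every stationary `α_{∞,1}`-mixing random field with a finite `q`-th moment (`q > 1`)
is θ-lex weakly dependent. -/
theorem alphaInfOne_mixing_implies_thetaLexWeaklyDependent
    {Ω : Type*} [MeasurableSpace Ω] (P : Measure Ω) [IsProbabilityMeasure P]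
    {m : ℕ} (hm : 1 ≤ m)
    (X : (Fin m → ℤ) → Ω → ℝ) (hmeas : ∀ t, Measurable (X t)) (hstat : Stationary P X)
    (q : ℝ) (hq : 1 < q) (hmom : Integrable (fun ω => |X 0 ω| ^ q) P)
    (hmix : Tendsto (alphaInfOne P X) atTop (𝓝 0)) :
    ThetaLexWeaklyDependent P X := by
  classical
  set C : ℝ := ∫ ω, |X 0 ω| ^ q ∂P with hCdef
  have hC0 : 0 ≤ C := integral_nonneg fun ω => Real.rpow_nonneg (abs_nonneg _) _
  have hq0 : (0:ℝ) < q := by linarith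
  have hqpos : (0:ℝ) < 1 - 1/q := by
    have h1 : 1/q < 1 := by rw [div_lt_one hq0]; linarith
    linarith
  set e : ℝ := 1 - 1/q with hedef
  set a : ℝ → ℝ := fun h => max (alphaInfOne P X h) 0 with hadef
  refine ⟨fun h => (4 + 2*C) * a h ^ e, ?_, ?_⟩
  · -- convergence of θ
    have h1 : Tendsto a atTop (𝓝 0) := by
      have h2 : Tendsto (fun h => max (alphaInfOne P X h) 0) atTop (𝓝 (max 0 0)) :=
        hmix.max tendsto_const_nhds
      simpa [hadef] using h2
    have h2 : Tendsto (fun h => a h ^ e) atTop (𝓝 ((0:ℝ) ^ e)) :=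
      (Real.continuousAt_rpow_const 0 e (Or.inr (le_of_lt hqpos))).tendsto.comp h1
    rw [Real.zero_rpow (ne_of_gt hqpos)] at h2
    simpa using h2.const_mul (4 + 2*C)
  · intro h hh u j Γ hinj hΓ F G MF LG hFmeas hFb hGmeas hGbdd hGlip
    obtain ⟨MG, hMG⟩ := hGbdd
    have hMF : 0 ≤ MF := le_trans (abs_nonneg _) (hFb 0)
    have hLG : 0 ≤ LG := by
      have h1 := hGlip 0 1
      rw [show |(0:ℝ) - 1| = 1 by norm_num, mul_one] at h1
      exact le_trans (abs_nonneg _) h1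
    -- the σ-algebras
    have hM : sigmaOn X (↑(Finset.image Γ Finset.univ) : Set (Fin m → ℤ)) ≤
        (inferInstance : MeasurableSpace Ω) := by
      rw [sigmaOn]; exact iSup₂_le fun s _ => (hmeas s).comap_le
    have hN : sigmaOn X ({j} : Set (Fin m → ℤ)) ≤ (inferInstance : MeasurableSpace Ω) := by
      rw [sigmaOn]; exact iSup₂_le fun s _ => (hmeas s).comap_le
    have hXmeasM : ∀ i : Fin u,
        Measurable[sigmaOn X (↑(Finset.image Γ Finset.univ) : Set (Fin m → ℤ))] (X (Γ i)) := by
      intro i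
      have h1 : MeasurableSpace.comap (X (Γ i)) inferInstance ≤
          sigmaOn X (↑(Finset.image Γ Finset.univ) : Set (Fin m → ℤ)) := by
        rw [sigmaOn]
        exact le_iSup₂ (f := fun s (_ : s ∈ (↑(Finset.image Γ Finset.univ) : Set (Fin m → ℤ))) =>
          MeasurableSpace.comap (X s) inferInstance) (Γ i) (by simp)
      have h0 : Measurable[MeasurableSpace.comap (X (Γ i)) inferInstance] (X (Γ i)) :=
        fun s hs => ⟨s, hs, rfl⟩
      exact h0.mono h1 le_rfl
    have hvec : Measurable[sigmaOn X (↑(Finset.image Γ Finset.univ) : Set (Fin m → ℤ))]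
        (fun ω (i : Fin u) => X (Γ i) ω) :=
      @measurable_pi_lambda Ω (Fin u) (fun _ => ℝ)
        (sigmaOn X (↑(Finset.image Γ Finset.univ) : Set (Fin m → ℤ)))
        (fun _ => inferInstance) _ (fun i => hXmeasM i)
    have hFoM : Measurable[sigmaOn X (↑(Finset.image Γ Finset.univ) : Set (Fin m → ℤ))]
        (fun ω => F (fun i => X (Γ i) ω)) := hFmeas.comp hvec
    have hXjN : Measurable[sigmaOn X ({j} : Set (Fin m → ℤ))] (X j) := by
      have h1 : MeasurableSpace.comap (X j) inferInstance ≤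
          sigmaOn X ({j} : Set (Fin m → ℤ)) := by
        rw [sigmaOn]
        exact le_iSup₂ (f := fun s (_ : s ∈ ({j} : Set (Fin m → ℤ))) =>
          MeasurableSpace.comap (X s) inferInstance) j rfl
      have h0 : Measurable[MeasurableSpace.comap (X j) inferInstance] (X j) :=
        fun s hs => ⟨s, hs, rfl⟩
      exact h0.mono h1 le_rfl
    -- alpha bound
    have halpha : alphaOf P (sigmaOn X (↑(Finset.image Γ Finset.univ) : Set (Fin m → ℤ)))
        (sigmaOn X ({j} : Set (Fin m → ℤ))) ≤ a h := by
      have hbdd : BddAbove {r | ∃ (Γ' : Finset (Fin m → ℤ)) (j' : Fin m → ℤ),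
          (∀ i ∈ Γ', h ≤ ‖i - j'‖) ∧
          r = alphaOf P (sigmaOn X (Γ' : Set (Fin m → ℤ))) (sigmaOn X {j'})} := by
        refine ⟨1, ?_⟩
        rintro r ⟨Γ', j', _, rfl⟩
        exact alphaOf_le_one _ _ P
      have hmem : alphaOf P (sigmaOn X (↑(Finset.image Γ Finset.univ) : Set (Fin m → ℤ)))
          (sigmaOn X ({j} : Set (Fin m → ℤ))) ∈
          {r | ∃ (Γ' : Finset (Fin m → ℤ)) (j' : Fin m → ℤ),
          (∀ i ∈ Γ', h ≤ ‖i - j'‖) ∧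
          r = alphaOf P (sigmaOn X (Γ' : Set (Fin m → ℤ))) (sigmaOn X {j'})} := by
        refine ⟨Finset.image Γ Finset.univ, j, ?_, rfl⟩
        intro i hi
        obtain ⟨k, _, rfl⟩ := Finset.mem_image.mp hi
        have h2 := (hΓ k).2
        rwa [norm_sub_rev]
      refine le_trans ?_ (le_max_left _ _)
      exact le_csSup hbdd hmem
    -- moment transfer to X j
    have gmeas : Measurable (fun x : ℝ => |x| ^ q) :=
      ((Real.continuous_rpow_const (le_of_lt hq0)).comp continuous_abs).measurable
    have hmap1 : Measure.map (fun ω (_ : Fin 1) => X j ω) P =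
        Measure.map (fun ω (_ : Fin 1) => X 0 ω) P := by
      have h1 := hstat j 1 (fun _ => (0 : Fin m → ℤ))
      simpa using h1
    have hmapj : Measure.map (X j) P = Measure.map (X 0) P := by
      have hev : Measurable (fun g : Fin 1 → ℝ => g 0) := measurable_pi_apply 0
      have h1 : Measurable (fun ω (_ : Fin 1) => X j ω) :=
        measurable_pi_lambda _ fun _ => hmeas j
      have h2 : Measurable (fun ω (_ : Fin 1) => X 0 ω) :=
        measurable_pi_lambda _ fun _ => hmeas 0
      calc Measure.map (X j) P
          = (P.map (fun ω (_ : Fin 1) => X j ω)).map (fun g => g 0) := by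
            rw [Measure.map_map hev h1]; rfl
        _ = (P.map (fun ω (_ : Fin 1) => X 0 ω)).map (fun g => g 0) := by rw [hmap1]
        _ = Measure.map (X 0) P := by rw [Measure.map_map hev h2]; rfl
    have hXjq_int : Integrable (fun ω => |X j ω| ^ q) P := by
      have hint0 : Integrable (fun x : ℝ => |x| ^ q) (P.map (X 0)) := by
        rw [integrable_map_measure gmeas.aestronglyMeasurable (hmeas 0).aemeasurable]
        exact hmom
      rw [← hmapj] at hint0
      exact (integrable_map_measure gmeas.aestronglyMeasurable (hmeas j).aemeasurable).mp hint0
    have hXjq_eq : ∫ ω, |X j ω| ^ q ∂P = C := by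
      calc ∫ ω, |X j ω| ^ q ∂P
          = ∫ x, |x| ^ q ∂(P.map (X j)) :=
            (integral_map (hmeas j).aemeasurable gmeas.aestronglyMeasurable).symm
        _ = ∫ x, |x| ^ q ∂(P.map (X 0)) := by rw [hmapj]
        _ = C := integral_map (hmeas 0).aemeasurable gmeas.aestronglyMeasurable
    -- notation
    have hFb' : ∀ ω, |F (fun i => X (Γ i) ω)| ≤ MF := fun ω => hFb _
    have hFoMeas0 : Measurable (fun ω => F (fun i => X (Γ i) ω)) := hFoM.mono hM le_rfl
    have hFoInt : Integrable (fun ω => F (fun i => X (Γ i) ω)) P :=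
      integrable_of_bdd hFoMeas0 hFb'
    have hGoMeas : Measurable (fun ω => G (X j ω)) := hGmeas.comp (hmeas j)
    have hGoInt : Integrable (fun ω => G (X j ω)) P :=
      integrable_of_bdd hGoMeas fun ω => hMG _
    -- master bound
    have master : ∀ T : ℝ, 0 < T →
        |cov P (fun ω => F (fun i => X (Γ i) ω)) (fun ω => G (X j ω))| ≤
          4 * MF * LG * T * a h + 2 * MF * LG * C / T ^ (q - 1) := by
      intro T hT
      have hHoN : Measurable[sigmaOn X ({j} : Set (Fin m → ℤ))]
          (fun ω => G (phiT T (X j ω))) := (hGmeas.comp (phiT_measurable T)).comp hXjN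
      have hHoMeas : Measurable (fun ω => G (phiT T (X j ω))) := hHoN.mono hN le_rfl
      have hHoInt : Integrable (fun ω => G (phiT T (X j ω))) P :=
        integrable_of_bdd hHoMeas fun ω => hMG _
      have hFoGo : Integrable (fun ω => F (fun i => X (Γ i) ω) * G (X j ω)) P :=
        hGoInt.bdd_mul hFoMeas0.aestronglyMeasurable
          (ae_of_all _ (by simpa [Real.norm_eq_abs] using hFb'))
      have hFoHo : Integrable (fun ω => F (fun i => X (Γ i) ω) * G (phiT T (X j ω))) P :=
        hHoInt.bdd_mul hFoMeas0.aestronglyMeasurable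
          (ae_of_all _ (by simpa [Real.norm_eq_abs] using hFb'))
      have hdec := cov_decomp (P := P) hFoInt hGoInt hHoInt hFoGo hFoHo
      -- first term
      have ht1 : |cov P (fun ω => F (fun i => X (Γ i) ω)) (fun ω => G (phiT T (X j ω)))| ≤
          4 * MF * (LG * T) * a h := by
        have hHoC : ∀ ω, |G (phiT T (X j ω)) - G 0| ≤ LG * T := by
          intro ω
          have h1 := hGlip (phiT T (X j ω)) 0
          have h2 : |phiT T (X j ω) - 0| ≤ T := by
            rw [sub_zero]; exact phiT_abs_le hT.le _
          calc |G (phiT T (X j ω)) - G 0| ≤ LG * |phiT T (X j ω) - 0| := h1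
            _ ≤ LG * T := mul_le_mul_of_nonneg_left h2 hLG
        have hHoCN : Measurable[sigmaOn X ({j} : Set (Fin m → ℤ))]
            (fun ω => G (phiT T (X j ω)) - G 0) := hHoN.sub measurable_const
        have hkey := cov_abs_le_alpha (P := P) hM hN hMF (by positivity : (0:ℝ) ≤ LG * T)
          hFoM hFb' hHoCN hHoC
        have hc := cov_sub_const (P := P) hFoInt hHoInt hFoHo (G 0)
        calc |cov P (fun ω => F (fun i => X (Γ i) ω)) (fun ω => G (phiT T (X j ω)))|
            = |cov P (fun ω => F (fun i => X (Γ i) ω))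
                (fun ω => G (phiT T (X j ω)) - G 0)| := by rw [hc]
          _ ≤ 4 * MF * (LG * T) * alphaOf P
                (sigmaOn X (↑(Finset.image Γ Finset.univ) : Set (Fin m → ℤ)))
                (sigmaOn X ({j} : Set (Fin m → ℤ))) := hkey
          _ ≤ 4 * MF * (LG * T) * a h :=
              mul_le_mul_of_nonneg_left halpha (by positivity)
      -- second term
      have hR_bound : ∀ ω, |G (X j ω) - G (phiT T (X j ω))| ≤ LG / T^(q-1) * |X j ω|^q := by
        intro ω
        have h1 := hGlip (X j ω) (phiT T (X j ω))
        have h2 := phiT_diff_le hT hq (x := X j ω)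
        calc |G (X j ω) - G (phiT T (X j ω))| ≤ LG * |X j ω - phiT T (X j ω)| := h1
          _ ≤ LG * (|X j ω|^q / T^(q-1)) := mul_le_mul_of_nonneg_left h2 hLG
          _ = LG / T^(q-1) * |X j ω|^q := by ring
      have hRoInt : Integrable (fun ω => G (X j ω) - G (phiT T (X j ω))) P :=
        hGoInt.sub hHoInt
      have hintR : ∫ ω, |G (X j ω) - G (phiT T (X j ω))| ∂P ≤ LG / T^(q-1) * C := by
        calc ∫ ω, |G (X j ω) - G (phiT T (X j ω))| ∂P
            ≤ ∫ ω, LG / T^(q-1) * |X j ω|^q ∂P :=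
              integral_mono hRoInt.abs (hXjq_int.const_mul _) hR_bound
          _ = LG / T^(q-1) * C := by rw [integral_const_mul, hXjq_eq]
      have ht2 : |cov P (fun ω => F (fun i => X (Γ i) ω))
          (fun ω => G (X j ω) - G (phiT T (X j ω)))| ≤ 2 * MF * (LG / T^(q-1) * C) := by
        refine le_trans (cov_abs_le_two_mul hMF hFoMeas0 hFb' hRoInt) ?_
        exact mul_le_mul_of_nonneg_left hintR (by positivity)
      have hTq : (0:ℝ) < T ^ (q-1) := Real.rpow_pos_of_pos hT _
      calc |cov P (fun ω => F (fun i => X (Γ i) ω)) (fun ω => G (X j ω))|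
          ≤ |cov P (fun ω => F (fun i => X (Γ i) ω)) (fun ω => G (phiT T (X j ω)))| +
            |cov P (fun ω => F (fun i => X (Γ i) ω))
              (fun ω => G (X j ω) - G (phiT T (X j ω)))| := by
            rw [hdec]; exact abs_add_le _ _
        _ ≤ 4 * MF * (LG * T) * a h + 2 * MF * (LG / T^(q-1) * C) := add_le_add ht1 ht2
        _ = 4 * MF * LG * T * a h + 2 * MF * LG * C / T ^ (q - 1) := by ring
    -- choose T
    show |cov P _ _| ≤ (4 + 2*C) * a h ^ e * MF * LG
    have ha0 : 0 ≤ a h := le_max_right _ _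
    rcases eq_or_lt_of_le ha0 with haz | hap
    · -- a h = 0
      have hael : a h = 0 := haz.symm
      have hzero : ((4:ℝ) + 2*C) * a h ^ e * MF * LG = 0 := by
        rw [hael, Real.zero_rpow (ne_of_gt hqpos)]; ring
      rw [hzero]
      have hb : ∀ T : ℝ, T ≥ 1 →
          |cov P (fun ω => F (fun i => X (Γ i) ω)) (fun ω => G (X j ω))| ≤
            2*MF*LG*C * T^(-(q-1)) := by
        intro T hT
        have h1 := master T (by linarith)
        rw [hael] at h1
        rw [Real.rpow_neg (by linarith : (0:ℝ) ≤ T)]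
        calc |cov P (fun ω => F (fun i => X (Γ i) ω)) (fun ω => G (X j ω))|
            ≤ 4*MF*LG*T*0 + 2*MF*LG*C/T^(q-1) := h1
          _ = 2*MF*LG*C * (T^(q-1))⁻¹ := by rw [div_eq_mul_inv]; ring
      have htend : Tendsto (fun T : ℝ => 2*MF*LG*C * T^(-(q-1))) atTop (𝓝 0) := by
        have h1 := (tendsto_rpow_neg_atTop (by linarith : (0:ℝ) < q - 1)).const_mul
          (2*MF*LG*C)
        simpa using h1
      exact ge_of_tendsto htend (eventually_atTop.mpr ⟨1, hb⟩)
    · -- a h > 0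
      have hT : 0 < a h ^ (-(1/q)) := Real.rpow_pos_of_pos hap _
      have hm1 := master _ hT
      have e1 : a h ^ (-(1/q)) * a h = a h ^ e := by
        calc a h ^ (-(1/q)) * a h = a h ^ (-(1/q)) * a h ^ (1:ℝ) := by
              rw [Real.rpow_one]
          _ = a h ^ (-(1/q) + 1) := (Real.rpow_add hap _ _).symm
          _ = a h ^ e := by congr 1; rw [hedef]; ring
      have e2 : (a h ^ (-(1/q))) ^ (q - 1) = a h ^ (-(1/q) * (q-1)) := by
        rw [← Real.rpow_mul (le_of_lt hap)]
      have e3 : C / (a h ^ (-(1/q))) ^ (q-1) = C * a h ^ e := by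
        have hqne : q ≠ 0 := ne_of_gt hq0
        rw [e2, show -(1/q) * (q-1) = -e by rw [hedef]; field_simp,
          Real.rpow_neg (le_of_lt hap), div_eq_mul_inv, inv_inv]
      calc |cov P (fun ω => F (fun i => X (Γ i) ω)) (fun ω => G (X j ω))|
          ≤ 4*MF*LG*(a h ^ (-(1/q)))*a h + 2*MF*LG*C/(a h ^ (-(1/q)))^(q-1) := hm1
        _ = 4*MF*LG*(a h ^ (-(1/q)) * a h) + 2*MF*LG*(C/(a h ^ (-(1/q)))^(q-1)) := by
            ring
        _ = 4*MF*LG*(a h ^ e) + 2*MF*LG*(C * a h ^ e) := by rw [e1, e3]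
        _ = (4 + 2*C) * a h ^ e * MF * LG := by ring


end
end

section
/- Let X = (X_t)_{t in Z^m} be a real-valued random field. Then for every h in N, the theta-lex coefficient theta(h) equals the mixingale-type coefficient theta_h, i.e. sup_{u in N} theta_u(h) = sup_{j in Z^m} sup_{g in L_1} || E[g(X_j) | sigma(X_k : k in V_j^h)] - E[g(X_j)] ||_{L^1}. -/
open MeasureTheory Filter Topology

noncomputable section

/-- The θ-lex coefficient `θ(h) = sup_u θ_u(h)` of a random field on `ℤ^m`: the
supremum of `|Cov(F(X_Γ), G(X_j))| / (‖F‖_∞ Lip(G))` over all `u`, all `Γ ⊆ V_j^h`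
with `|Γ| = u`, all bounded measurable `F` and all bounded Lipschitz `G` (equivalently,
over all valid bounds `MF` on `F` and Lipschitz constants `LG` of `G`). -/
def thetaCoeff {Ω : Type*} [MeasurableSpace Ω] (P : Measure Ω) {m : ℕ}
    (X : (Fin m → ℤ) → Ω → ℝ) (h : ℝ) : ℝ :=
  sSup {r | ∃ (u : ℕ) (j : Fin m → ℤ) (Γ : Fin u → (Fin m → ℤ)) (F : (Fin u → ℝ) → ℝ)
    (G : ℝ → ℝ) (MF LG : ℝ),
    Function.Injective Γ ∧ (∀ i, Γ i ∈ VSet j h) ∧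
    Measurable F ∧ (∀ x, |F x| ≤ MF) ∧
    Measurable G ∧ (∃ MG, ∀ x, |G x| ≤ MG) ∧ (∀ x y, |G x - G y| ≤ LG * |x - y|) ∧
    0 < MF ∧ 0 < LG ∧
    r = |cov P (fun ω => F (fun i => X (Γ i) ω)) (fun ω => G (X j ω))| / (MF * LG)}

/-- The mixingale-type coefficient
`θ_h = sup_{j} sup_{g ∈ Λ₁} ‖E[g(X_j) | σ(X_k : k ∈ V_j^h)] - E[g(X_j)]‖_{L¹}`, where
`Λ₁` is the class of bounded Lipschitz functions `g : ℝ → ℝ` with `Lip(g) ≤ 1`. -/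
def thetaMix {Ω : Type*} [MeasurableSpace Ω] (P : Measure Ω) {m : ℕ}
    (X : (Fin m → ℤ) → Ω → ℝ) (h : ℝ) : ℝ :=
  sSup {r | ∃ (j : Fin m → ℤ) (g : ℝ → ℝ),
    (∀ x y, |g x - g y| ≤ |x - y|) ∧ (∃ M, ∀ x, |g x| ≤ M) ∧
    r = ∫ ω, |MeasureTheory.condExp (sigmaOn X (VSet j h)) P
          (fun ω' => g (X j ω')) ω - ∫ ω', g (X j ω') ∂P| ∂P}

section Aux

variable {Ω : Type*}

lemma integrable_of_abs_le [mΩ : MeasurableSpace Ω] {P : Measure Ω} [IsProbabilityMeasure P] {f : Ω → ℝ} (hf : AEStronglyMeasurable f P) {M : ℝ}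
    (hM : ∀ x, |f x| ≤ M) : Integrable f P :=
  ⟨hf, HasFiniteIntegral.of_bounded (C := M) (Filter.Eventually.of_forall fun x => by
    simpa [Real.norm_eq_abs] using hM x)⟩

lemma integral_mul_condexp {m' : MeasurableSpace Ω} [mΩ : MeasurableSpace Ω] {P : Measure Ω} [IsProbabilityMeasure P] (hm : m' ≤ mΩ) {f Y : Ω → ℝ}
    (hf : StronglyMeasurable[m'] f) {c : ℝ} (hfc : ∀ ω, |f ω| ≤ c) (hY : Integrable Y P) :
    ∫ ω, f ω * Y ω ∂P = ∫ ω, f ω * (P[Y|m']) ω ∂P := by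
  have hpull := condExp_stronglyMeasurable_mul_of_bound (μ := P) hm hf hY c
    (Filter.Eventually.of_forall fun x => by simpa [Real.norm_eq_abs] using hfc x)
  have h1 : ∫ ω, f ω * Y ω ∂P = ∫ ω, (P[f * Y|m']) ω ∂P := (integral_condExp hm).symm
  rw [h1]
  refine integral_congr_ae (hpull.mono fun ω hω => ?_)
  simpa [Pi.mul_apply] using hω

lemma cov_eq_integral {m' : MeasurableSpace Ω} [mΩ : MeasurableSpace Ω] {P : Measure Ω} [IsProbabilityMeasure P] (hm : m' ≤ mΩ) {f Y : Ω → ℝ}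
    (hf : StronglyMeasurable[m'] f) {c : ℝ} (hfc : ∀ ω, |f ω| ≤ c) (hY : Integrable Y P) :
    cov P f Y = ∫ ω, f ω * ((P[Y|m']) ω - ∫ ω', Y ω' ∂P) ∂P := by
  have hfm0 : AEStronglyMeasurable f P := (hf.mono hm).aestronglyMeasurable
  have hfint : Integrable f P := integrable_of_abs_le hfm0 hfc
  have h2 : Integrable (fun ω => f ω * (P[Y|m']) ω) P :=
    integrable_condExp.bdd_mul hfm0 (ae_of_all _ fun x => by simpa [Real.norm_eq_abs] using hfc x)
  have hsplit : (fun ω => f ω * ((P[Y|m']) ω - ∫ ω', Y ω' ∂P))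
      = fun ω => f ω * (P[Y|m']) ω - f ω * (∫ ω', Y ω' ∂P) := by
    funext ω; ring
  rw [hsplit, integral_sub h2 (hfint.mul_const _), integral_mul_const]
  show cov P f Y = (∫ ω, f ω * (P[Y|m']) ω ∂P) - (∫ ω, f ω ∂P) * (∫ ω', Y ω' ∂P)
  rw [cov, integral_mul_condexp hm hf hfc hY]

lemma sigmaOn_le [mΩ : MeasurableSpace Ω] {I : Type*} {X : I → Ω → ℝ}
    (hmeas : ∀ t, Measurable (X t)) (S : Set I) : sigmaOn X S ≤ mΩ :=
  iSup₂_le fun s _ => measurable_iff_comap_le.mp (hmeas s)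

lemma sigmaOn_mono [mΩ : MeasurableSpace Ω] {I : Type*} {X : I → Ω → ℝ}
    {S T : Set I} (h : S ⊆ T) : sigmaOn X S ≤ sigmaOn X T :=
  biSup_mono h

lemma comap_pi_eq [mΩ : MeasurableSpace Ω] {I : Type*} {X : I → Ω → ℝ} {u : ℕ}
    (Γ : Fin u → I) :
    MeasurableSpace.comap (fun ω (i : Fin u) => X (Γ i) ω) MeasurableSpace.pi
      = ⨆ i : Fin u, MeasurableSpace.comap (X (Γ i)) inferInstance := by
  simp_rw [MeasurableSpace.pi, MeasurableSpace.comap_iSup, MeasurableSpace.comap_comp,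
    Function.comp_def]

lemma sigmaOn_range_eq_comap [mΩ : MeasurableSpace Ω] {I : Type*} {X : I → Ω → ℝ} {u : ℕ}
    (Γ : Fin u → I) :
    sigmaOn X (Set.range Γ)
      = MeasurableSpace.comap (fun ω (i : Fin u) => X (Γ i) ω) MeasurableSpace.pi := by
  rw [comap_pi_eq, sigmaOn, iSup_range]

open ProbabilityTheory in
lemma exists_fin_approx {m : ℕ} [mΩ : MeasurableSpace Ω] (P : Measure Ω)
    [IsProbabilityMeasure P]
    (X : (Fin m → ℤ) → Ω → ℝ) (hmeas : ∀ t, Measurable (X t))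
    (j : Fin m → ℤ) (h : ℝ) {g : ℝ → ℝ} (hg : Measurable g) {M : ℝ} (hM : ∀ x, |g x| ≤ M)
    {ε : ℝ} (hε : 0 < ε) :
    ∃ (u : ℕ) (Γ : Fin u → (Fin m → ℤ)) (F : (Fin u → ℝ) → ℝ),
      Function.Injective Γ ∧ (∀ i, Γ i ∈ VSet j h) ∧ Measurable F ∧ (∀ x, |F x| ≤ 1) ∧
      (∫ ω, |MeasureTheory.condExp (sigmaOn X (VSet j h)) P (fun ω' => g (X j ω')) ω
          - ∫ ω', g (X j ω') ∂P| ∂P) - ε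
        ≤ cov P (fun ω => F (fun i => X (Γ i) ω)) (fun ω => g (X j ω)) := by
  set V : Set (Fin m → ℤ) := VSet j h with hV
  set Y : Ω → ℝ := fun ω => g (X j ω) with hY
  have hYm : Measurable Y := hg.comp (hmeas j)
  have hYint : Integrable Y P := integrable_of_abs_le hYm.aestronglyMeasurable fun x => hM _
  have h𝒢le : sigmaOn X V ≤ mΩ := sigmaOn_le hmeas V
  obtain ⟨e, he⟩ := exists_surjective_nat (Fin m → ℤ)
  set ℱ : Filtration ℕ mΩ :=
    { seq := fun n => sigmaOn X (V ∩ e '' Set.Iio n)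
      mono' := fun a b hab =>
        sigmaOn_mono (Set.inter_subset_inter_right _ (Set.image_mono (Set.Iio_subset_Iio hab)))
      le' := fun n => sigmaOn_le hmeas _ } with hℱ
  have hℱle𝒢 : ∀ n, ℱ n ≤ sigmaOn X V := fun n => sigmaOn_mono Set.inter_subset_left
  have hsup : (⨆ n, ℱ n) = sigmaOn X V := by
    refine le_antisymm (iSup_le fun n => hℱle𝒢 n) ?_
    refine iSup₂_le fun s hs => ?_
    obtain ⟨k, hk⟩ := he s
    refine le_trans ?_ (le_iSup _ (k + 1))
    have hsmem : s ∈ V ∩ e '' Set.Iio (k + 1) := ⟨hs, ⟨k, by simp, hk⟩⟩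
    exact le_iSup₂ (f := fun (t : Fin m → ℤ) (_ : t ∈ V ∩ e '' Set.Iio (k + 1)) =>
      MeasurableSpace.comap (X t) inferInstance) s hsmem
  set W : Ω → ℝ := MeasureTheory.condExp (sigmaOn X V) P Y with hW
  have hWm : StronglyMeasurable[⨆ n, ℱ n] W := by rw [hsup]; exact stronglyMeasurable_condExp
  have hWint : Integrable W P := integrable_condExp
  have hLevy := hWint.tendsto_eLpNorm_condExp hWm
  have hev : ∀ᶠ n in atTop,
      eLpNorm (MeasureTheory.condExp (ℱ n) P W - W) 1 P < ENNReal.ofReal ε :=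
    hLevy.eventually_lt_const (by simpa using ENNReal.ofReal_pos.mpr hε)
  obtain ⟨n, hn⟩ := hev.exists
  -- the finite index set
  have hfin : (V ∩ e '' Set.Iio n).Finite := Set.Finite.inter_of_right ((Set.finite_Iio n).image e) V
  set s : Finset (Fin m → ℤ) := hfin.toFinset with hs
  set u : ℕ := s.card with hu
  set Γ : Fin u → (Fin m → ℤ) := fun i => ((s.equivFin.symm i : {x // x ∈ s}) : Fin m → ℤ) with hΓ
  have hΓinj : Function.Injective Γ :=
    fun a b hab => s.equivFin.symm.injective (Subtype.ext hab)
  have hΓrange : Set.range Γ = ↑s := by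
    ext x
    constructor
    · rintro ⟨i, rfl⟩; exact (s.equivFin.symm i).2
    · intro hx
      refine ⟨s.equivFin ⟨x, Finset.mem_coe.mp hx⟩, ?_⟩
      show ((s.equivFin.symm (s.equivFin ⟨x, Finset.mem_coe.mp hx⟩) : {x // x ∈ s}) : Fin m → ℤ) = x
      rw [Equiv.symm_apply_apply]
  have hΓmem : ∀ i, Γ i ∈ VSet j h := by
    intro i
    have : Γ i ∈ (s : Set (Fin m → ℤ)) := by rw [← hΓrange]; exact Set.mem_range_self i
    have := (hfin.mem_toFinset).1 (by exact_mod_cast this)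
    exact this.1
  have hrangeS : Set.range Γ = V ∩ e '' Set.Iio n := by rw [hΓrange, hs, Set.Finite.coe_toFinset]
  set φ : Ω → (Fin u → ℝ) := fun ω i => X (Γ i) ω with hφdef
  have hφ : Measurable φ := measurable_pi_lambda _ fun i => hmeas _
  have hcomap : MeasurableSpace.comap φ MeasurableSpace.pi = ℱ n := by
    rw [← sigmaOn_range_eq_comap Γ, hrangeS]
  -- the conditional-distribution representative
  set κ := condDistrib (X j) φ P with hκ
  set ζ : (Fin u → ℝ) → ℝ := fun x => ∫ y, g y ∂κ x with hζ
  have hζm : Measurable ζ := by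
    have hgsm : StronglyMeasurable fun p : (Fin u → ℝ) × ℝ => g p.2 :=
      (hg.comp measurable_snd).stronglyMeasurable
    exact hgsm.integral_kernel_prod_right'.measurable
  have hcd : MeasureTheory.condExp (ℱ n) P Y =ᵐ[P] fun ω => ζ (φ ω) := by
    have := condExp_ae_eq_integral_condDistrib (μ := P) hφ (hmeas j).aemeasurable
      hg.stronglyMeasurable hYint
    rw [hcomap] at this
    exact this
  set c : ℝ := ∫ ω, Y ω ∂P with hc
  set Zn : Ω → ℝ := MeasureTheory.condExp (ℱ n) P Y with hZn
  have hZnW : MeasureTheory.condExp (ℱ n) P W =ᵐ[P] Zn :=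
    condExp_condExp_of_le (by rw [← hsup]; exact le_iSup _ n) h𝒢le
  have hL1 : ∫ ω, |Zn ω - W ω| ∂P ≤ ε := by
    have heq : eLpNorm (Zn - W) 1 P < ENNReal.ofReal ε := by
      have := eLpNorm_congr_ae (p := 1) (μ := P) (hZnW.sub (EventuallyEq.refl _ W))
      calc eLpNorm (Zn - W) 1 P = eLpNorm (fun x => (P[W|ℱ n]) x - W x) 1 P := by
            rw [← this]; rfl
        _ < ENNReal.ofReal ε := hn
    have hint : AEStronglyMeasurable (fun ω => Zn ω - W ω) P :=
      (integrable_condExp.sub integrable_condExp).aestronglyMeasurable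
    have h1 : ∫ ω, |Zn ω - W ω| ∂P = (∫⁻ ω, ‖Zn ω - W ω‖ₑ ∂P).toReal := by
      rw [← integral_norm_eq_lintegral_enorm hint]
      simp [Real.norm_eq_abs]
    rw [h1]
    refine ENNReal.toReal_le_of_le_ofReal hε.le ?_
    rw [← eLpNorm_one_eq_lintegral_enorm] at *
    exact le_of_lt (by exact heq)
  -- define F
  set F : (Fin u → ℝ) → ℝ := fun x => if ζ x - c < 0 then (-1 : ℝ) else 1 with hF
  have hFm : Measurable F :=
    Measurable.ite (measurableSet_lt (hζm.sub measurable_const) measurable_const)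
      measurable_const measurable_const
  have hFb : ∀ x, |F x| ≤ 1 := by
    intro x
    show |(if ζ x - c < 0 then (-1 : ℝ) else 1)| ≤ 1
    split_ifs <;> norm_num
  have hFφm : StronglyMeasurable[ℱ n] fun ω => F (φ ω) := by
    have hmeas' : Measurable[MeasurableSpace.comap φ MeasurableSpace.pi] fun ω => F (φ ω) :=
      hFm.comp (comap_measurable φ)
    rw [hcomap] at hmeas'
    exact hmeas'.stronglyMeasurable
  have hcov : cov P (fun ω => F (fun i => X (Γ i) ω)) Y = ∫ ω, F (φ ω) * (Zn ω - c) ∂P :=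
    cov_eq_integral (ℱ.le n) hFφm (fun ω => hFb (φ ω)) hYint
  have hpt : (fun ω => F (φ ω) * (Zn ω - c)) =ᵐ[P] fun ω => |Zn ω - c| := by
    filter_upwards [hcd] with ω hω
    have hζφ : ζ (φ ω) = Zn ω := hω.symm
    by_cases hlt : Zn ω - c < 0
    · simp only [hF, hζφ, if_pos hlt]
      rw [abs_of_neg hlt]; ring
    · simp only [hF, hζφ, if_neg hlt]
      rw [abs_of_nonneg (not_lt.1 hlt)]; ring
  have hcov' : cov P (fun ω => F (fun i => X (Γ i) ω)) Y = ∫ ω, |Zn ω - c| ∂P := by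
    rw [hcov]; exact integral_congr_ae hpt
  have hintZc : Integrable (fun ω => |Zn ω - c|) P :=
    (integrable_condExp.sub (integrable_const c)).abs
  have hintZW : Integrable (fun ω => |Zn ω - W ω|) P :=
    (integrable_condExp.sub integrable_condExp).abs
  have htri : ∫ ω, |W ω - c| ∂P ≤ (∫ ω, |Zn ω - c| ∂P) + ∫ ω, |Zn ω - W ω| ∂P := by
    rw [← integral_add hintZc hintZW]
    refine integral_mono (integrable_condExp.sub (integrable_const c)).abs
      (hintZc.add hintZW) fun ω => ?_
    calc |W ω - c| ≤ |W ω - Zn ω| + |Zn ω - c| := abs_sub_le _ _ _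
    _ = |Zn ω - c| + |Zn ω - W ω| := by rw [abs_sub_comm (W ω)]; ring
  refine ⟨u, Γ, F, hΓinj, hΓmem, hFm, hFb, ?_⟩
  have : (∫ ω, |W ω - c| ∂P) - ε ≤ ∫ ω, |Zn ω - c| ∂P := by linarith
  calc (∫ ω, |MeasureTheory.condExp (sigmaOn X (VSet j h)) P (fun ω' => g (X j ω')) ω
          - ∫ ω', g (X j ω') ∂P| ∂P) - ε
      = (∫ ω, |W ω - c| ∂P) - ε := rfl
    _ ≤ ∫ ω, |Zn ω - c| ∂P := this
    _ = cov P (fun ω => F (fun i => X (Γ i) ω)) (fun ω => g (X j ω)) := hcov'.symm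

lemma sSup_eq_sSup_of_eps {A B : Set ℝ} (hA : A.Nonempty) (hB : B.Nonempty)
    (h1 : ∀ a ∈ A, ∃ b ∈ B, a ≤ b)
    (h2 : ∀ b ∈ B, ∀ ε > (0 : ℝ), ∃ a ∈ A, b - ε ≤ a) : sSup A = sSup B := by
  by_cases hBb : BddAbove B
  · have hAb : BddAbove A := ⟨sSup B, fun a ha => by
      obtain ⟨b, hb, hab⟩ := h1 a ha
      exact hab.trans (le_csSup hBb hb)⟩
    refine le_antisymm (csSup_le hA fun a ha => ?_) (csSup_le hB fun b hb => ?_)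
    · obtain ⟨b, hb, hab⟩ := h1 a ha
      exact hab.trans (le_csSup hBb hb)
    · refine le_of_forall_pos_le_add fun ε hε => ?_
      obtain ⟨a, ha, hba⟩ := h2 b hb ε hε
      have := le_csSup hAb ha
      linarith
  · have hAb : ¬ BddAbove A := by
      rintro ⟨MA, hMA⟩
      refine hBb ⟨MA + 1, fun b hb => ?_⟩
      obtain ⟨a, ha, hba⟩ := h2 b hb 1 one_pos
      have := hMA ha
      linarith
    rw [Real.sSup_of_not_bddAbove hAb, Real.sSup_of_not_bddAbove hBb]

end Aux

/-- Lemma 5.1: for a real-valued random field on `ℤ^m`, the θ-lex coefficient `θ(h)`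
coincides with the mixingale-type coefficient `θ_h` for every `h ∈ ℕ`. -/
theorem thetaCoeff_eq_thetaMix
    {Ω : Type*} [MeasurableSpace Ω] (P : Measure Ω) [IsProbabilityMeasure P]
    {m : ℕ} (X : (Fin m → ℤ) → Ω → ℝ) (hmeas : ∀ t, Measurable (X t))
    (h : ℕ) (hh : 1 ≤ h) :
    thetaCoeff P X (h : ℝ) = thetaMix P X (h : ℝ) := by
  classical
  have h𝒢le : ∀ j : Fin m → ℤ, sigmaOn X (VSet j (h : ℝ)) ≤ ‹MeasurableSpace Ω› :=
    fun j => sigmaOn_le hmeas _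
  rw [thetaCoeff, thetaMix]
  refine sSup_eq_sSup_of_eps ?_ ?_ ?_ ?_
  · -- A nonempty
    refine ⟨0, 0, fun _ => 0, Fin.elim0, fun _ => 1, fun _ => 0, 1, 1,
      fun i => i.elim0, fun i => i.elim0, measurable_const, fun _ => by norm_num,
      measurable_const, ⟨0, fun _ => by norm_num⟩,
      fun x y => by simp [abs_nonneg], one_pos, one_pos, ?_⟩
    simp [cov]
  · -- B nonempty
    refine ⟨0, fun _ => 0, fun _ => 0, fun x y => by simp [abs_nonneg], ⟨0, fun _ => by norm_num⟩,
      ?_⟩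
    rw [condExp_const (h𝒢le _) (0 : ℝ)]
    simp
  · -- A ≤ B pointwise
    rintro r ⟨u, j, Γ, F, G, MF, LG, hΓinj, hΓmem, hFm, hFb, hGm, ⟨MG, hMG⟩, hGLip, hMF, hLG,
      rfl⟩
    set Y : Ω → ℝ := fun ω => G (X j ω) with hYdef
    have hYm : Measurable Y := hGm.comp (hmeas j)
    have hYint : Integrable Y P := integrable_of_abs_le hYm.aestronglyMeasurable fun x => hMG _
    set f : Ω → ℝ := fun ω => F (fun i => X (Γ i) ω) with hfdef
    set φ : Ω → (Fin u → ℝ) := fun ω i => X (Γ i) ω with hφdef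
    have hf𝒢 : StronglyMeasurable[sigmaOn X (VSet j (h : ℝ))] f := by
      have h1 : Measurable[MeasurableSpace.comap φ MeasurableSpace.pi] f :=
        hFm.comp (comap_measurable φ)
      have h2 : MeasurableSpace.comap φ MeasurableSpace.pi ≤ sigmaOn X (VSet j (h : ℝ)) := by
        rw [← sigmaOn_range_eq_comap Γ]
        exact sigmaOn_mono (Set.range_subset_iff.mpr hΓmem)
      exact (h1.mono h2 le_rfl).stronglyMeasurable
    set c : ℝ := ∫ ω, Y ω ∂P with hc
    set W' : Ω → ℝ := MeasureTheory.condExp (sigmaOn X (VSet j (h : ℝ))) P Y with hW'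
    have hcov : cov P f Y = ∫ ω, f ω * (W' ω - c) ∂P :=
      cov_eq_integral (h𝒢le j) hf𝒢 (fun ω => hFb _) hYint
    have hWc_int : Integrable (fun ω => W' ω - c) P := integrable_condExp.sub (integrable_const c)
    have hprod_int : Integrable (fun ω => f ω * (W' ω - c)) P :=
      hWc_int.bdd_mul (hf𝒢.mono (h𝒢le j)).aestronglyMeasurable
        (ae_of_all _ fun x => by simpa [Real.norm_eq_abs] using hFb _)
    have habs : |cov P f Y| ≤ MF * ∫ ω, |W' ω - c| ∂P := by
      rw [hcov]
      calc |∫ ω, f ω * (W' ω - c) ∂P| ≤ ∫ ω, |f ω| * |W' ω - c| ∂P := by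
            simpa [Real.norm_eq_abs] using norm_integral_le_integral_norm
              (fun ω => f ω * (W' ω - c)) (μ := P)
        _ ≤ ∫ ω, MF * |W' ω - c| ∂P := by
            refine integral_mono (by simpa [abs_mul] using hprod_int.abs)
              (hWc_int.abs.const_mul MF) fun ω => ?_
            exact mul_le_mul_of_nonneg_right (hFb _) (abs_nonneg _)
        _ = MF * ∫ ω, |W' ω - c| ∂P := integral_const_mul MF _
    -- the candidate element of B
    set gbar : ℝ → ℝ := fun x => LG⁻¹ * G x with hgbar
    have hLGinv : (0 : ℝ) < LG⁻¹ := inv_pos.2 hLG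
    have hgbarY : (fun ω' => gbar (X j ω')) = LG⁻¹ • Y := by
      funext ω; simp [hgbar, hYdef]
    have hbval : ∫ ω, |MeasureTheory.condExp (sigmaOn X (VSet j (h : ℝ))) P
          (fun ω' => gbar (X j ω')) ω - ∫ ω', gbar (X j ω') ∂P| ∂P
        = LG⁻¹ * ∫ ω, |W' ω - c| ∂P := by
      have hce : MeasureTheory.condExp (sigmaOn X (VSet j (h : ℝ))) P (fun ω' => gbar (X j ω'))
          =ᵐ[P] fun ω => LG⁻¹ * W' ω := by
        rw [hgbarY]
        exact (condExp_smul (m := sigmaOn X (VSet j (h : ℝ))) (μ := P) LG⁻¹ Y).mono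
          fun ω hω => by simpa using hω
      have hint : ∫ ω', gbar (X j ω') ∂P = LG⁻¹ * c := by
        rw [hgbarY]
        exact integral_const_mul LG⁻¹ Y (μ := P)
      rw [hint]
      have hmulint : LG⁻¹ * ∫ ω, |W' ω - c| ∂P = ∫ ω, LG⁻¹ * |W' ω - c| ∂P :=
        (integral_const_mul _ _).symm
      rw [hmulint]
      refine integral_congr_ae (hce.mono fun ω hω => ?_)
      dsimp only
      rw [hω, ← mul_sub, abs_mul, abs_of_pos hLGinv]
    refine ⟨_, ⟨j, gbar, ?_, ⟨LG⁻¹ * MG, ?_⟩, rfl⟩, ?_⟩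
    · intro x y
      have : |gbar x - gbar y| = LG⁻¹ * |G x - G y| := by
        rw [hgbar, ← mul_sub, abs_mul, abs_of_pos hLGinv]
      rw [this]
      calc LG⁻¹ * |G x - G y| ≤ LG⁻¹ * (LG * |x - y|) :=
            mul_le_mul_of_nonneg_left (hGLip x y) hLGinv.le
        _ = |x - y| := by field_simp
    · intro x
      rw [hgbar, abs_mul, abs_of_pos hLGinv]
      exact mul_le_mul_of_nonneg_left (hMG x) hLGinv.le
    · rw [hbval]
      rw [div_le_iff₀ (mul_pos hMF hLG)]
      calc |cov P f Y| ≤ MF * ∫ ω, |W' ω - c| ∂P := habs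
        _ = LG⁻¹ * (∫ ω, |W' ω - c| ∂P) * (MF * LG) := by field_simp
  · -- B approximated by A
    rintro b ⟨j, g, hgLip, ⟨M, hM⟩, rfl⟩ ε hε
    have hgm : Measurable g := by
      have : LipschitzWith 1 g := LipschitzWith.of_dist_le_mul fun x y => by
        rw [Real.dist_eq, Real.dist_eq]; simpa using hgLip x y
      exact this.continuous.measurable
    obtain ⟨u, Γ, F, hinj, hmem, hFm, hFb, hle⟩ :=
      exists_fin_approx P X hmeas j (h : ℝ) hgm hM hε
    refine ⟨|cov P (fun ω => F (fun i => X (Γ i) ω)) (fun ω => g (X j ω))| / (1 * 1),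
      ⟨u, j, Γ, F, g, 1, 1, hinj, hmem, hFm, hFb, hgm, ⟨M, hM⟩,
        fun x y => by simpa using hgLip x y, one_pos, one_pos, rfl⟩, ?_⟩
    calc (∫ ω, |MeasureTheory.condExp (sigmaOn X (VSet j (h : ℝ))) P
            (fun ω' => g (X j ω')) ω - ∫ ω', g (X j ω') ∂P| ∂P) - ε
        ≤ cov P (fun ω => F (fun i => X (Γ i) ω)) (fun ω => g (X j ω)) := hle
      _ ≤ |cov P (fun ω => F (fun i => X (Γ i) ω)) (fun ω => g (X j ω))| := le_abs_self _
      _ = |cov P (fun ω => F (fun i => X (Γ i) ω)) (fun ω => g (X j ω))| / (1 * 1) := by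
            norm_num

end
end

section
/- Let X = (X_t)_{t in Z^m} be a stationary real-valued random field with E[|X_0|^{2+delta}] < infinity for some delta > 0, and suppose the mixingale-type coefficients satisfy theta_h = O(h^{-alpha}) for some alpha > m(1 + 1/delta). Then the integral from 0 to ||X_0||_{L^1} of thetatilde(u) * (Q_{X_0} composed with G_{X_0})(u) du is finite. -/
open MeasureTheory Filter Topology ENNReal

noncomputable section

/-- The stationary mixingale-type coefficient
`θ_h = sup_{g ∈ Λ₁} ‖E[g(X_0) | σ(X_k : k ∈ V_0^h)] - E[g(X_0)]‖_{L¹}`. -/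
def thetaH {Ω : Type*} [MeasurableSpace Ω] (P : Measure Ω) {m : ℕ}
    (X : (Fin m → ℤ) → Ω → ℝ) (h : ℝ) : ℝ :=
  sSup {r | ∃ g : ℝ → ℝ,
    (∀ x y, |g x - g y| ≤ |x - y|) ∧ (∃ M, ∀ x, |g x| ≤ M) ∧
    r = ∫ ω, |MeasureTheory.condExp (sigmaOn X (VSet 0 h)) P
          (fun ω' => g (X 0 ω')) ω - ∫ ω', g (X 0 ω') ∂P| ∂P}

/-- `Q_Y`, the generalized inverse of the tail function `x ↦ P(|Y| > x)`. -/
def tailQ {Ω : Type*} [MeasurableSpace Ω] (P : Measure Ω) (Y : Ω → ℝ) (u : ℝ) : ℝ :=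
  sInf {t : ℝ | 0 ≤ t ∧ (P {ω | t < |Y ω|}).toReal ≤ u}

/-- `G_Y`, the (generalized) inverse of `x ↦ ∫_0^x Q_Y(u) du`. -/
def GInv {Ω : Type*} [MeasurableSpace Ω] (P : Measure Ω) (Y : Ω → ℝ) (v : ℝ) : ℝ :=
  sInf {x : ℝ | 0 ≤ x ∧ v ≤ ∫ u in (0 : ℝ)..x, tailQ P Y u}

/-- `θ̃(u) = ∑_{k ∈ V_0} 1{u < θ_{‖k‖_∞}}`, as an extended nonnegative real. -/
def thetaTilde {Ω : Type*} [MeasurableSpace Ω] (P : Measure Ω) {m : ℕ}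
    (X : (Fin m → ℤ) → Ω → ℝ) (u : ℝ) : ℝ≥0∞ :=
  ∑' k : {k : Fin m → ℤ // lexLe k 0},
    if u < thetaH P X ‖(k : Fin m → ℤ)‖ then 1 else 0

/-! ### Auxiliary lemmas -/

namespace ThetaAux

open Set

variable {Ω : Type*} [MeasurableSpace Ω] {P : Measure Ω} {Y : Ω → ℝ} {δ : ℝ}

/-- The moment constant. -/
def MM (P : Measure Ω) (Y : Ω → ℝ) (δ : ℝ) : ℝ := max (∫ ω, |Y ω| ^ (2 + δ) ∂P) 1

lemma MM_pos : 0 < MM P Y δ := lt_of_lt_of_le one_pos (le_max_right _ _)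

section Prob

variable [IsProbabilityMeasure P]

/-- The tail function is antitone (as toReal of measures). -/
lemma tail_antitone {s t : ℝ} (hst : s ≤ t) :
    (P {ω | t < |Y ω|}).toReal ≤ (P {ω | s < |Y ω|}).toReal := by
  apply ENNReal.toReal_mono (measure_ne_top _ _)
  exact measure_mono (fun ω hω => lt_of_le_of_lt hst hω)

lemma tail_le_one (t : ℝ) : (P {ω | t < |Y ω|}).toReal ≤ 1 := by
  rw [← ENNReal.toReal_one]
  exact ENNReal.toReal_mono one_ne_top prob_le_one

/-- Markov's inequality for the tail. -/
lemma tail_markov (hδ : 0 < δ) (hmom : Integrable (fun ω => |Y ω| ^ (2 + δ)) P)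
    {t : ℝ} (ht : 0 < t) :
    (P {ω | t < |Y ω|}).toReal ≤ MM P Y δ / t ^ (2 + δ) := by
  have h2δ : (0 : ℝ) < 2 + δ := by linarith
  have hεpos : 0 < t ^ (2 + δ) := Real.rpow_pos_of_pos ht _
  have hmarkov := mul_meas_ge_le_integral_of_nonneg
    (ae_of_all P (fun ω => Real.rpow_nonneg (abs_nonneg (Y ω)) (2 + δ))) hmom (t ^ (2 + δ))
  have hsub : {ω | t < |Y ω|} ⊆ {x | t ^ (2 + δ) ≤ |Y x| ^ (2 + δ)} := by
    intro ω hω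
    exact Real.rpow_le_rpow ht.le (le_of_lt hω) h2δ.le
  have h1 : (P {ω | t < |Y ω|}).toReal ≤ (P {x | t ^ (2 + δ) ≤ |Y x| ^ (2 + δ)}).toReal :=
    ENNReal.toReal_mono (measure_ne_top _ _) (measure_mono hsub)
  calc (P {ω | t < |Y ω|}).toReal ≤ (P {x | t ^ (2 + δ) ≤ |Y x| ^ (2 + δ)}).toReal := h1
    _ ≤ (t ^ (2 + δ))⁻¹ * ∫ ω, |Y ω| ^ (2 + δ) ∂P := by
        rw [le_inv_mul_iff₀ hεpos]; exact hmarkov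
    _ ≤ (t ^ (2 + δ))⁻¹ * MM P Y δ := by
        apply mul_le_mul_of_nonneg_left (le_max_left _ _) (by positivity)
    _ = MM P Y δ / t ^ (2 + δ) := by rw [div_eq_inv_mul]

/-- The candidate element of the tailQ defining set. -/
lemma mem_tailQ_set (hδ : 0 < δ) (hmom : Integrable (fun ω => |Y ω| ^ (2 + δ)) P)
    {u : ℝ} (hu : 0 < u) :
    (MM P Y δ / u) ^ (2 + δ)⁻¹ ∈ {t : ℝ | 0 ≤ t ∧ (P {ω | t < |Y ω|}).toReal ≤ u} := by
  have h2δ : (0 : ℝ) < 2 + δ := by linarith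
  have hMu : 0 < MM P Y δ / u := div_pos MM_pos hu
  set t₀ := (MM P Y δ / u) ^ (2 + δ)⁻¹ with ht₀
  have ht₀pos : 0 < t₀ := Real.rpow_pos_of_pos hMu _
  refine ⟨ht₀pos.le, ?_⟩
  have hpow : t₀ ^ (2 + δ) = MM P Y δ / u := Real.rpow_inv_rpow hMu.le h2δ.ne'
  calc (P {ω | t₀ < |Y ω|}).toReal ≤ MM P Y δ / t₀ ^ (2 + δ) := tail_markov hδ hmom ht₀pos
    _ = MM P Y δ / (MM P Y δ / u) := by rw [hpow]
    _ = u := by rw [div_div_eq_mul_div, mul_comm, mul_div_assoc, div_self MM_pos.ne', mul_one]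

omit [IsProbabilityMeasure P] in
lemma bddBelow_tailQ_set (u : ℝ) :
    BddBelow {t : ℝ | 0 ≤ t ∧ (P {ω | t < |Y ω|}).toReal ≤ u} :=
  ⟨0, fun _ ht => ht.1⟩

lemma tailQ_nonneg (hδ : 0 < δ) (hmom : Integrable (fun ω => |Y ω| ^ (2 + δ)) P)
    {u : ℝ} (hu : 0 < u) : 0 ≤ tailQ P Y u :=
  le_csInf ⟨_, mem_tailQ_set hδ hmom hu⟩ (fun _ ht => ht.1)

lemma tailQ_le (hδ : 0 < δ) (hmom : Integrable (fun ω => |Y ω| ^ (2 + δ)) P)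
    {u : ℝ} (hu : 0 < u) : tailQ P Y u ≤ (MM P Y δ / u) ^ (2 + δ)⁻¹ :=
  csInf_le (bddBelow_tailQ_set u) (mem_tailQ_set hδ hmom hu)

lemma tailQ_antitone (hδ : 0 < δ) (hmom : Integrable (fun ω => |Y ω| ^ (2 + δ)) P)
    {u v : ℝ} (hu : 0 < u) (huv : u ≤ v) : tailQ P Y v ≤ tailQ P Y u := by
  apply csInf_le_csInf (bddBelow_tailQ_set v) ⟨_, mem_tailQ_set hδ hmom hu⟩
  exact fun t ht => ⟨ht.1, le_trans ht.2 huv⟩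

/-- measurable modification of tailQ -/
def gQ (P : Measure Ω) (Y : Ω → ℝ) (u : ℝ) : ℝ := if 0 < u then tailQ P Y u else 0

omit [IsProbabilityMeasure P] in
lemma gQ_eq_on_pos {u : ℝ} (hu : 0 < u) : gQ P Y u = tailQ P Y u := if_pos hu

lemma gQ_measurable (hδ : 0 < δ) (hmom : Integrable (fun ω => |Y ω| ^ (2 + δ)) P) :
    Measurable (gQ P Y) := by
  apply measurable_of_Iio
  intro a
  have : gQ P Y ⁻¹' Iio a =
      {u : ℝ | 0 < u ∧ tailQ P Y u < a} ∪ (if 0 < a then Iic (0:ℝ) else ∅) := by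
    ext u
    simp only [mem_preimage, mem_Iio, gQ, mem_union, mem_setOf_eq]
    by_cases hu : 0 < u
    · rw [if_pos hu]
      constructor
      · exact fun h => Or.inl ⟨hu, h⟩
      · rintro (⟨_, h⟩ | h)
        · exact h
        · split_ifs at h with ha
          · exact absurd (mem_Iic.1 h) (not_le.2 hu)
          · exact absurd h (notMem_empty u)
    · rw [if_neg hu]
      constructor
      · intro ha
        right; rw [if_pos ha]; exact mem_Iic.2 (not_lt.1 hu)
      · rintro (⟨h1, _⟩ | h)
        · exact absurd h1 hu
        · split_ifs at h with ha
          · exact ha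
          · exact absurd h (notMem_empty u)
  rw [this]
  apply MeasurableSet.union
  · have hord : OrdConnected {u : ℝ | 0 < u ∧ tailQ P Y u < a} := by
      constructor
      rintro x ⟨hx0, hxa⟩ y ⟨_, _⟩ z hz
      exact ⟨lt_of_lt_of_le hx0 hz.1,
        lt_of_le_of_lt (tailQ_antitone hδ hmom hx0 hz.1) hxa⟩
    exact hord.measurableSet
  · split
    · exact measurableSet_Iic
    · exact MeasurableSet.empty

/-- the dominating function is integrable on `Ioc 0 x`. -/
lemma bound_integrableOn (P : Measure Ω) (Y : Ω → ℝ) (hδ : 0 < δ) {x : ℝ} (hx : 0 < x) :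
    IntegrableOn (fun u : ℝ => MM P Y δ ^ (2 + δ)⁻¹ * u ^ (-(2 + δ)⁻¹)) (Ioc 0 x) volume := by
  have hβ : -1 < -(2 + δ)⁻¹ := by
    have h1 : (2 + δ)⁻¹ < 1 := by
      rw [inv_lt_one_iff₀]; right; linarith
    linarith
  have h := intervalIntegral.intervalIntegrable_rpow' (a := 0) (b := x) hβ
  rw [intervalIntegrable_iff, uIoc_of_le hx.le] at h
  exact h.const_mul _

lemma tailQ_le' (hδ : 0 < δ) (hmom : Integrable (fun ω => |Y ω| ^ (2 + δ)) P)
    {u : ℝ} (hu : 0 < u) :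
    tailQ P Y u ≤ MM P Y δ ^ (2 + δ)⁻¹ * u ^ (-(2 + δ)⁻¹) := by
  have h := tailQ_le hδ hmom hu
  rw [Real.div_rpow MM_pos.le hu.le] at h
  rw [Real.rpow_neg hu.le, ← div_eq_mul_inv]
  exact h

/-- tailQ is integrable on `Ioc 0 x`. -/
lemma tailQ_integrableOn (hδ : 0 < δ) (hmom : Integrable (fun ω => |Y ω| ^ (2 + δ)) P)
    {x : ℝ} (hx : 0 < x) : IntegrableOn (tailQ P Y) (Ioc 0 x) volume := by
  have hae : tailQ P Y =ᵐ[volume.restrict (Ioc 0 x)] gQ P Y := by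
    rw [Filter.EventuallyEq, ae_restrict_iff' measurableSet_Ioc]
    exact ae_of_all _ (fun u hu => (gQ_eq_on_pos hu.1).symm)
  apply Integrable.mono' (bound_integrableOn P Y hδ hx)
    (((gQ_measurable hδ hmom).aestronglyMeasurable).congr hae.symm)
  rw [ae_restrict_iff' measurableSet_Ioc]
  refine ae_of_all _ (fun u hu => ?_)
  rw [Real.norm_eq_abs, abs_of_nonneg (tailQ_nonneg hδ hmom hu.1)]
  exact tailQ_le' hδ hmom hu.1

/-- Key upper bound on the partial integrals of `tailQ`. -/
lemma integral_tailQ_le (hδ : 0 < δ) (hmom : Integrable (fun ω => |Y ω| ^ (2 + δ)) P)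
    {x : ℝ} (hx : 0 ≤ x) :
    (∫ u in (0:ℝ)..x, tailQ P Y u) ≤
      (MM P Y δ ^ (2 + δ)⁻¹ / (1 - (2 + δ)⁻¹)) * x ^ (1 - (2 + δ)⁻¹) := by
  set β := (2 + δ)⁻¹ with hβdef
  have hβpos : 0 < β := by positivity
  have hβlt : β < 1 := by rw [hβdef, inv_lt_one_iff₀]; right; linarith
  rcases eq_or_lt_of_le hx with rfl | hx
  · rw [intervalIntegral.integral_same, Real.zero_rpow (by linarith), mul_zero]
  · rw [intervalIntegral.integral_of_le hx.le]
    have hle : ∫ u in Ioc (0:ℝ) x, tailQ P Y u ≤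
        ∫ u in Ioc (0:ℝ) x, MM P Y δ ^ β * u ^ (-β) := by
      apply setIntegral_mono_on (tailQ_integrableOn hδ hmom hx)
        (bound_integrableOn P Y hδ hx) measurableSet_Ioc
      exact fun u hu => tailQ_le' hδ hmom hu.1
    refine hle.trans ?_
    rw [← intervalIntegral.integral_of_le hx.le, intervalIntegral.integral_const_mul,
      integral_rpow (Or.inl (by linarith : (-1:ℝ) < -β))]
    rw [Real.zero_rpow (by linarith : -β + 1 ≠ 0), sub_zero]
    rw [div_mul_eq_mul_div, mul_div_assoc]
    apply mul_le_mul_of_nonneg_left _ (Real.rpow_nonneg MM_pos.le _)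
    rw [show -β + 1 = 1 - β by ring]

/-- the tail function, measurable. -/
lemma tail_measurable :
    Measurable (fun t : ℝ => (P {ω | t < |Y ω|}).toReal) := by
  have : Antitone (fun t : ℝ => (P {ω | t < |Y ω|}).toReal) :=
    fun s t hst => tail_antitone hst
  exact this.measurable

/-- The finite upper bound for `∫⁻ (ofReal ∘ tailQ)` on `Ioc 0 1`. -/
lemma lintegral_tailQ_lt_top (hδ : 0 < δ)
    (hmom : Integrable (fun ω => |Y ω| ^ (2 + δ)) P) :
    (∫⁻ u in Ioc (0:ℝ) 1, ENNReal.ofReal (tailQ P Y u)) < ⊤ := by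
  have hb := bound_integrableOn (δ := δ) P Y hδ (one_pos (α := ℝ))
  have hfin := hb.hasFiniteIntegral
  apply lt_of_le_of_lt _ hfin
  apply lintegral_mono_ae
  rw [ae_restrict_iff' measurableSet_Ioc]
  refine ae_of_all _ (fun u hu => ?_)
  refine le_trans (ENNReal.ofReal_le_ofReal (tailQ_le' hδ hmom hu.1)) ?_
  exact Real.ofReal_le_enorm _

/-- Layer-cake comparison: `E|Y| ≤ ∫_0^1 tailQ`. -/
lemma abs_integral_le (hY : Measurable Y) (hδ : 0 < δ)
    (hmom : Integrable (fun ω => |Y ω| ^ (2 + δ)) P) :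
    (∫ ω, |Y ω| ∂P) ≤ ∫ u in (0:ℝ)..1, tailQ P Y u := by
  set Hr : ℝ → ℝ := fun t => (P {ω | t < |Y ω|}).toReal with hHr
  have h1 : (∫ ω, |Y ω| ∂P) = (∫⁻ ω, ENNReal.ofReal (|Y ω|) ∂P).toReal := by
    rw [integral_eq_lintegral_of_nonneg_ae (ae_of_all _ (fun ω => abs_nonneg (Y ω)))
      hY.abs.aestronglyMeasurable]
  have h2 : (∫⁻ ω, ENNReal.ofReal (|Y ω|) ∂P) = ∫⁻ t in Ioi (0:ℝ), P {a | t < |Y a|} :=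
    lintegral_eq_lintegral_meas_lt P (ae_of_all _ (fun ω => abs_nonneg (Y ω)))
      hY.abs.aemeasurable
  have h3 : ∀ t ∈ Ioi (0:ℝ), P {a | t < |Y a|} =
      ∫⁻ u in Ioc (0:ℝ) 1, (if u < Hr t then (1:ℝ≥0∞) else 0) := by
    intro t _
    have heq : (fun u : ℝ => if u < Hr t then (1:ℝ≥0∞) else 0) =
        (Iio (Hr t)).indicator (fun _ => (1:ℝ≥0∞)) := by
      funext u; simp [Set.indicator_apply, mem_Iio]
    rw [heq, lintegral_indicator measurableSet_Iio, setLIntegral_one,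
      Measure.restrict_apply measurableSet_Iio]
    have hint : Iio (Hr t) ∩ Ioc (0:ℝ) 1 = Ioo 0 (Hr t) := by
      ext u
      simp only [mem_inter_iff, mem_Iio, mem_Ioc, mem_Ioo]
      constructor
      · rintro ⟨h1', h2', _⟩; exact ⟨h2', h1'⟩
      · rintro ⟨h1', h2'⟩
        exact ⟨h2', h1', le_trans h2'.le (tail_le_one t)⟩
    rw [hint, Real.volume_Ioo, sub_zero, ENNReal.ofReal_toReal (measure_ne_top _ _)]
  have hHrm : Measurable Hr := tail_measurable
  have h4 : (∫⁻ t in Ioi (0:ℝ), ∫⁻ u in Ioc (0:ℝ) 1, (if u < Hr t then (1:ℝ≥0∞) else 0)) =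
      ∫⁻ u in Ioc (0:ℝ) 1, ∫⁻ t in Ioi (0:ℝ), (if u < Hr t then (1:ℝ≥0∞) else 0) := by
    apply lintegral_lintegral_swap
    have hset : MeasurableSet {p : ℝ × ℝ | p.2 < Hr p.1} :=
      measurableSet_lt measurable_snd (hHrm.comp measurable_fst)
    have : (Function.uncurry fun t u => if u < Hr t then (1:ℝ≥0∞) else 0) =
        {p : ℝ × ℝ | p.2 < Hr p.1}.indicator (fun _ => (1:ℝ≥0∞)) := by
      funext p
      simp [Function.uncurry, Set.indicator_apply, mem_setOf_eq]
    rw [this]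
    exact ((measurable_const.indicator hset).aemeasurable)
  have h5 : ∀ u ∈ Ioc (0:ℝ) 1,
      (∫⁻ t in Ioi (0:ℝ), (if u < Hr t then (1:ℝ≥0∞) else 0)) ≤
        ENNReal.ofReal (tailQ P Y u) := by
    intro u hu
    have heq : (fun t : ℝ => if u < Hr t then (1:ℝ≥0∞) else 0) =
        {t : ℝ | u < Hr t}.indicator (fun _ => (1:ℝ≥0∞)) := by
      funext t; simp [Set.indicator_apply, mem_setOf_eq]
    have hsm : MeasurableSet {t : ℝ | u < Hr t} := measurableSet_lt measurable_const hHrm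
    rw [heq, lintegral_indicator hsm, setLIntegral_one, Measure.restrict_apply hsm]
    have hsub : {t : ℝ | u < Hr t} ∩ Ioi (0:ℝ) ⊆ Ioc 0 (tailQ P Y u) := by
      rintro t ⟨ht1, ht2⟩
      refine ⟨ht2, ?_⟩
      by_contra hcon
      push_neg at hcon
      have hne : {s : ℝ | 0 ≤ s ∧ (P {ω | s < |Y ω|}).toReal ≤ u}.Nonempty :=
        ⟨_, mem_tailQ_set hδ hmom hu.1⟩
      obtain ⟨s, hs, hst⟩ := (csInf_lt_iff (bddBelow_tailQ_set u) hne).1 hcon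
      have : Hr t ≤ Hr s := tail_antitone hst.le
      exact absurd (le_trans this hs.2) (not_le.2 ht1)
    calc volume ({t : ℝ | u < Hr t} ∩ Ioi (0:ℝ)) ≤ volume (Ioc 0 (tailQ P Y u)) :=
          measure_mono hsub
      _ = ENNReal.ofReal (tailQ P Y u) := by rw [Real.volume_Ioc, sub_zero]
  have hchain : (∫⁻ ω, ENNReal.ofReal (|Y ω|) ∂P) ≤
      ∫⁻ u in Ioc (0:ℝ) 1, ENNReal.ofReal (tailQ P Y u) := by
    rw [h2]
    calc (∫⁻ t in Ioi (0:ℝ), P {a | t < |Y a|})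
        = ∫⁻ t in Ioi (0:ℝ), ∫⁻ u in Ioc (0:ℝ) 1, (if u < Hr t then (1:ℝ≥0∞) else 0) :=
          setLIntegral_congr_fun measurableSet_Ioi h3
      _ = ∫⁻ u in Ioc (0:ℝ) 1, ∫⁻ t in Ioi (0:ℝ), (if u < Hr t then (1:ℝ≥0∞) else 0) := h4
      _ ≤ ∫⁻ u in Ioc (0:ℝ) 1, ENNReal.ofReal (tailQ P Y u) := by
          apply lintegral_mono_ae
          rw [ae_restrict_iff' measurableSet_Ioc]
          exact ae_of_all _ h5
  have hfin : (∫⁻ u in Ioc (0:ℝ) 1, ENNReal.ofReal (tailQ P Y u)) ≠ ⊤ :=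
    (lintegral_tailQ_lt_top hδ hmom).ne
  rw [h1, intervalIntegral.integral_of_le (by norm_num : (0:ℝ) ≤ 1)]
  have hQae : tailQ P Y =ᵐ[volume.restrict (Ioc (0:ℝ) 1)] gQ P Y := by
    rw [Filter.EventuallyEq, ae_restrict_iff' measurableSet_Ioc]
    exact ae_of_all _ (fun u hu => (gQ_eq_on_pos hu.1).symm)
  have hQint : (∫ u in Ioc (0:ℝ) 1, tailQ P Y u) =
      (∫⁻ u in Ioc (0:ℝ) 1, ENNReal.ofReal (tailQ P Y u)).toReal := by
    rw [integral_eq_lintegral_of_nonneg_ae]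
    · exact (ae_restrict_iff' measurableSet_Ioc).2
        (ae_of_all _ (fun u hu => tailQ_nonneg hδ hmom hu.1))
    · exact ((gQ_measurable hδ hmom).aestronglyMeasurable).congr hQae.symm
  rw [hQint]
  exact ENNReal.toReal_mono hfin hchain

/-- The constant `K`. -/
def KK (P : Measure Ω) (Y : Ω → ℝ) (δ : ℝ) : ℝ := MM P Y δ ^ (2 + δ)⁻¹ / (1 - (2 + δ)⁻¹)

omit [IsProbabilityMeasure P] in
lemma beta_pos (hδ : 0 < δ) : 0 < (2 + δ)⁻¹ := by positivity

omit [IsProbabilityMeasure P] in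
lemma beta_lt_one (hδ : 0 < δ) : (2 + δ)⁻¹ < 1 := by
  rw [inv_lt_one_iff₀]; right; linarith

lemma KK_pos (hδ : 0 < δ) : 0 < KK P Y δ := by
  apply div_pos (Real.rpow_pos_of_pos MM_pos _)
  linarith [beta_lt_one (δ := δ) hδ]

/-- Lower bound for `GInv`. -/
lemma GInv_ge (hY : Measurable Y) (hδ : 0 < δ)
    (hmom : Integrable (fun ω => |Y ω| ^ (2 + δ)) P)
    {v : ℝ} (hv : 0 < v) (hvT : v < ∫ ω, |Y ω| ∂P) :
    (v / KK P Y δ) ^ (1 - (2 + δ)⁻¹)⁻¹ ≤ GInv P Y v := by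
  set β := (2 + δ)⁻¹ with hβdef
  have hβ1 : 0 < 1 - β := by linarith [beta_lt_one (δ := δ) hδ]
  apply le_csInf
  · exact ⟨1, by norm_num, le_of_lt (lt_of_lt_of_le hvT (abs_integral_le hY hδ hmom))⟩
  · rintro x ⟨hx0, hxv⟩
    have hxK : v / KK P Y δ ≤ x ^ (1 - β) := by
      rw [div_le_iff₀ (KK_pos hδ)]
      calc v ≤ ∫ u in (0:ℝ)..x, tailQ P Y u := hxv
        _ ≤ KK P Y δ * x ^ (1 - β) := integral_tailQ_le hδ hmom hx0
        _ = x ^ (1 - β) * KK P Y δ := mul_comm _ _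
    calc (v / KK P Y δ) ^ (1 - β)⁻¹ ≤ (x ^ (1 - β)) ^ (1 - β)⁻¹ :=
          Real.rpow_le_rpow (le_of_lt (div_pos hv (KK_pos hδ))) hxK (inv_nonneg.2 hβ1.le)
      _ = x := Real.rpow_rpow_inv hx0 hβ1.ne'

/-- The key bound: `Q(G(v)) ≤ C₂ v^(-β/(1-β))`. -/
lemma tailQ_GInv_le (hY : Measurable Y) (hδ : 0 < δ)
    (hmom : Integrable (fun ω => |Y ω| ^ (2 + δ)) P)
    {v : ℝ} (hv : 0 < v) (hvT : v < ∫ ω, |Y ω| ∂P) :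
    tailQ P Y (GInv P Y v) ≤
      (MM P Y δ ^ (2 + δ)⁻¹ * KK P Y δ ^ ((2 + δ)⁻¹ / (1 - (2 + δ)⁻¹))) *
        v ^ (-((2 + δ)⁻¹ / (1 - (2 + δ)⁻¹))) := by
  set β := (2 + δ)⁻¹ with hβdef
  have hβpos : 0 < β := beta_pos hδ
  have hβ1 : 0 < 1 - β := by linarith [beta_lt_one (δ := δ) hδ]
  set x₀ := (v / KK P Y δ) ^ (1 - β)⁻¹ with hx₀def
  have hx₀pos : 0 < x₀ := Real.rpow_pos_of_pos (div_pos hv (KK_pos hδ)) _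
  have hge : x₀ ≤ GInv P Y v := GInv_ge hY hδ hmom hv hvT
  have h1 : tailQ P Y (GInv P Y v) ≤ tailQ P Y x₀ :=
    tailQ_antitone hδ hmom hx₀pos hge
  have h2 : tailQ P Y x₀ ≤ (MM P Y δ / x₀) ^ β := tailQ_le hδ hmom hx₀pos
  refine le_trans h1 (le_trans h2 ?_)
  have hx₀β : x₀ ^ β = (v / KK P Y δ) ^ (β / (1 - β)) := by
    rw [hx₀def, ← Real.rpow_mul (le_of_lt (div_pos hv (KK_pos hδ)))]
    congr 1
    field_simp
  rw [Real.div_rpow MM_pos.le hx₀pos.le, hx₀β, div_eq_mul_inv,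
    ← Real.inv_rpow (le_of_lt (div_pos hv (KK_pos hδ))), inv_div,
    Real.div_rpow (KK_pos hδ).le hv.le, div_eq_mul_inv, ← Real.rpow_neg hv.le, mul_assoc]

end Prob

/-- Norm of a nonzero integer vector is a natural number `≥ 1`. -/
lemma norm_int_vec {m : ℕ} (k : Fin m → ℤ) (hk : k ≠ 0) :
    ∃ n : ℕ, 1 ≤ n ∧ ‖k‖ = (n : ℝ) := by
  have hm : m ≠ 0 := by
    rintro rfl
    exact hk (funext fun i => i.elim0)
  have : Nonempty (Fin m) := ⟨⟨0, Nat.pos_of_ne_zero hm⟩⟩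
  set n : ℕ := Finset.univ.sup (fun i => (k i).natAbs) with hn
  obtain ⟨i, hi⟩ : ∃ i, k i ≠ 0 := Function.ne_iff.1 hk
  refine ⟨n, ?_, ?_⟩
  · calc 1 ≤ (k i).natAbs := Int.natAbs_pos.2 hi
      _ ≤ n := Finset.le_sup (f := fun i => (k i).natAbs) (Finset.mem_univ i)
  · apply le_antisymm
    · rw [pi_norm_le_iff_of_nonneg (by positivity)]
      intro j
      rw [Int.norm_eq_abs]
      have hcast : ((k j).natAbs : ℝ) = |((k j : ℤ) : ℝ)| := by
        rw [Nat.cast_natAbs, Int.cast_abs]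
      rw [← hcast]
      exact_mod_cast Finset.le_sup (f := fun i => (k i).natAbs) (Finset.mem_univ j)
    · obtain ⟨j, _, hj⟩ := Finset.exists_mem_eq_sup Finset.univ Finset.univ_nonempty
        (fun i => (k i).natAbs)
      rw [hn, hj]
      calc ((k j).natAbs : ℝ) = |(k j : ℝ)| := by
            rw [Nat.cast_natAbs, Int.cast_abs]
        _ = ‖k j‖ := (Int.norm_eq_abs _).symm
        _ ≤ ‖k‖ := norm_le_pi_norm k j

/-- Counting bound for `thetaTilde`. -/
lemma thetaTilde_le {m : ℕ} {X : (Fin m → ℤ) → Ω → ℝ} {α c'' u : ℝ}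
    (hα : 0 < α) (hc : 1 ≤ c'') (hu : 0 < u) (hcu : 1 ≤ c'' / u)
    (hdecay : ∀ n : ℕ, 1 ≤ n → thetaH P X (n : ℝ) ≤ c'' * (n : ℝ) ^ (-α)) :
    thetaTilde P X u ≤ ENNReal.ofReal ((5:ℝ) ^ m * (c'' / u) ^ ((m : ℝ) / α)) := by
  set y := (c'' / u) ^ α⁻¹ with hy
  have hcu0 : 0 < c'' / u := lt_of_lt_of_le one_pos hcu
  have hy1 : 1 ≤ y := by
    rw [hy, ← Real.one_rpow α⁻¹]
    exact Real.rpow_le_rpow zero_le_one hcu (inv_nonneg.2 hα.le)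
  set N := ⌈y⌉₊ with hN
  set F : Finset (Fin m → ℤ) := Fintype.piFinset (fun _ => Finset.Icc (-(N:ℤ)) (N:ℤ)) with hF
  have key : ∀ k : {k : Fin m → ℤ // lexLe k 0},
      (if u < thetaH P X ‖(k : Fin m → ℤ)‖ then (1:ℝ≥0∞) else 0) ≤
        (fun j : Fin m → ℤ => if j ∈ F then (1:ℝ≥0∞) else 0) (k : Fin m → ℤ) := by
    rintro ⟨k, -⟩
    simp only
    split_ifs with h1 h2
    · exact le_refl _
    · exfalso
      apply h2
      rw [hF, Fintype.mem_piFinset]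
      intro i
      rw [Finset.mem_Icc, ← abs_le]
      have hknorm : ‖k‖ ≤ (N : ℝ) := by
        rcases eq_or_ne k 0 with rfl | hk0
        · simp only [norm_zero]
          positivity
        · obtain ⟨n, hn1, hnk⟩ := norm_int_vec k hk0
          rw [hnk, Nat.cast_le]
          have hθ : thetaH P X (n : ℝ) ≤ c'' * (n : ℝ) ^ (-α) := hdecay n hn1
          have hnpos : (0:ℝ) < n := by exact_mod_cast hn1
          have hlt : (n : ℝ) ^ α < c'' / u := by
            have h3 : u < c'' * ((n:ℝ) ^ α)⁻¹ := by
              rw [← Real.rpow_neg hnpos.le]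
              exact lt_of_lt_of_le (by rwa [hnk] at h1) hθ
            rw [lt_div_iff₀ hu] at *
            calc (n:ℝ) ^ α * u = u * (n:ℝ) ^ α := mul_comm _ _
              _ < c'' * ((n:ℝ) ^ α)⁻¹ * (n:ℝ) ^ α := by
                  apply mul_lt_mul_of_pos_right h3 (Real.rpow_pos_of_pos hnpos α)
              _ = c'' := by
                  rw [mul_assoc, inv_mul_cancel₀ (Real.rpow_pos_of_pos hnpos α).ne', mul_one]
          have hny : (n : ℝ) ≤ y := by
            by_contra hcon
            push_neg at hcon
            have : y ^ α ≤ (n : ℝ) ^ α :=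
              Real.rpow_le_rpow (by positivity) hcon.le hα.le
            rw [hy, Real.rpow_inv_rpow hcu0.le hα.ne'] at this
            exact absurd (lt_of_le_of_lt this hlt) (lt_irrefl _)
          exact_mod_cast hny.trans (Nat.le_ceil y)
      have : ‖k i‖ ≤ (N : ℝ) := le_trans (norm_le_pi_norm k i) hknorm
      rw [Int.norm_eq_abs] at this
      exact_mod_cast this
    · exact zero_le
    · exact zero_le
  have step2 : thetaTilde P X u ≤ ∑' j : Fin m → ℤ, (if j ∈ F then (1:ℝ≥0∞) else 0) := by
    refine le_trans (ENNReal.tsum_le_tsum key) ?_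
    exact ENNReal.tsum_comp_le_tsum_of_injective Subtype.val_injective _
  have step3 : (∑' j : Fin m → ℤ, (if j ∈ F then (1:ℝ≥0∞) else 0)) = F.card := by
    rw [tsum_eq_sum (s := F) (fun j hj => if_neg hj)]
    rw [Finset.sum_congr rfl (fun j hj => if_pos hj), Finset.sum_const, nsmul_eq_mul, mul_one]
  have hcard : (F.card : ℝ) ≤ 5 ^ m * (c'' / u) ^ ((m : ℝ) / α) := by
    have hNcard : F.card = (2 * N + 1) ^ m := by
      rw [hF, Fintype.card_piFinset]
      simp only [Int.card_Icc]
      rw [Finset.prod_const, Finset.card_univ, Fintype.card_fin]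
      congr 1
      omega
    have h2N : ((2 * N + 1 : ℕ) : ℝ) ≤ 5 * y := by
      have hceil : (N : ℝ) < y + 1 := Nat.ceil_lt_add_one (by positivity)
      push_cast
      nlinarith
    have hym : y ^ m = (c'' / u) ^ ((m : ℝ) / α) := by
      rw [hy, ← Real.rpow_natCast ((c'' / u) ^ α⁻¹) m, ← Real.rpow_mul hcu0.le]
      congr 1
      field_simp
    calc (F.card : ℝ) = ((2 * N + 1 : ℕ) : ℝ) ^ m := by rw [hNcard]; push_cast; ring
      _ ≤ (5 * y) ^ m := pow_le_pow_left₀ (by positivity) h2N m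
      _ = 5 ^ m * y ^ m := mul_pow _ _ _
      _ = 5 ^ m * (c'' / u) ^ ((m : ℝ) / α) := by rw [hym]
  calc thetaTilde P X u ≤ F.card := le_trans step2 (le_of_eq step3)
    _ = ENNReal.ofReal (F.card : ℝ) := by
        rw [ENNReal.ofReal_natCast]
    _ ≤ ENNReal.ofReal ((5:ℝ) ^ m * (c'' / u) ^ ((m : ℝ) / α)) :=
        ENNReal.ofReal_le_ofReal hcard

end ThetaAux

/-- Lemma 5.3, second part: if `E[|X_0|^{2+δ}] < ∞` for some `δ > 0` and the
mixingale-type coefficients satisfy `θ_h = O(h^{-α})` with `α > m(1 + 1/δ)`, then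
`∫_0^{‖X_0‖_1} θ̃(u) · (Q_{X_0} ∘ G_{X_0})(u) du < ∞`. -/
theorem integral_condition_of_theta_decay
    {Ω : Type*} [MeasurableSpace Ω] (P : Measure Ω) [IsProbabilityMeasure P]
    {m : ℕ} (X : (Fin m → ℤ) → Ω → ℝ) (hmeas : ∀ t, Measurable (X t))
    (hstat : Stationary P X)
    (δ : ℝ) (hδ : 0 < δ) (hmom : Integrable (fun ω => |X 0 ω| ^ (2 + δ)) P)
    (α : ℝ) (hα : (m : ℝ) * (1 + 1 / δ) < α)
    (hdecay : ∃ c : ℝ, ∀ h : ℕ, 1 ≤ h → thetaH P X (h : ℝ) ≤ c * (h : ℝ) ^ (-α)) :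
    (∫⁻ u in Set.Ioc (0 : ℝ) (∫ ω, |X 0 ω| ∂P),
        thetaTilde P X u * ENNReal.ofReal (tailQ P (X 0) (GInv P (X 0) u)) ∂volume) < ⊤ := by
  classical
  open ThetaAux in
  set T := ∫ ω, |X 0 ω| ∂P with hTdef
  rcases le_or_gt T 0 with hT0 | hT0
  · rw [Set.Ioc_eq_empty (not_lt.2 hT0), Measure.restrict_empty, lintegral_zero_measure]
    exact ENNReal.zero_lt_top
  obtain ⟨c, hc⟩ := hdecay
  set c'' := max c (max T 1) with hc''def
  have hc''1 : (1:ℝ) ≤ c'' := le_trans (le_max_right T 1) (le_max_right _ _)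
  have hc''T : T ≤ c'' := le_trans (le_max_left T 1) (le_max_right _ _)
  have hαpos : 0 < α := lt_of_le_of_lt (by positivity) hα
  have hdecay'' : ∀ n : ℕ, 1 ≤ n → thetaH P X (n : ℝ) ≤ c'' * (n : ℝ) ^ (-α) := by
    intro n hn
    refine le_trans (hc n hn) ?_
    exact mul_le_mul_of_nonneg_right (le_max_left _ _)
      (Real.rpow_nonneg (Nat.cast_nonneg n) _)
  set β := (2 + δ)⁻¹ with hβdef
  set γ₁ := (m : ℝ) / α with hγ₁def
  set γ₂ := β / (1 - β) with hγ₂def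
  have hβpos : 0 < β := by positivity
  have hβlt : β < 1 := by rw [hβdef, inv_lt_one_iff₀]; right; linarith
  have hγ₂eq : γ₂ = 1 / (1 + δ) := by
    rw [hγ₂def, hβdef]
    have h2 : (0:ℝ) < 1 + δ := by positivity
    have h3 : (0:ℝ) < 1 - (2+δ)⁻¹ := by
      rw [sub_pos, inv_lt_one_iff₀]; right; linarith
    rw [div_eq_div_iff h3.ne' h2.ne']
    field_simp
    ring
  have hγ₁nonneg : 0 ≤ γ₁ := by positivity
  have hγsum : γ₁ + γ₂ < 1 := by
    have hγ₂lt : γ₂ = 1 / (1 + δ) := hγ₂eq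
    have h1δpos : (0:ℝ) < 1 + δ := by linarith
    have hkey : γ₁ < δ / (1 + δ) := by
      rcases Nat.eq_zero_or_pos m with hm0 | hm0
      · rw [hγ₁def, hm0]
        simp only [Nat.cast_zero, zero_div]
        positivity
      · have hmpos : (0:ℝ) < m := by exact_mod_cast hm0
        have hbpos : (0:ℝ) < (m:ℝ) * (1 + 1/δ) := by positivity
        have h1 : (m:ℝ) / α < (m:ℝ) / ((m:ℝ) * (1 + 1/δ)) :=
          div_lt_div_of_pos_left hmpos hbpos hα
        have h2 : (m:ℝ) / ((m:ℝ) * (1 + 1/δ)) = δ / (1 + δ) := by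
          have h2' : (0:ℝ) < 1 + δ := by positivity
          have h4 : (0:ℝ) < (m:ℝ) * (1 + 1/δ) := by positivity
          have h5 : δ * (1/δ) = 1 := by field_simp
          rw [div_eq_div_iff h4.ne' h2'.ne']
          linear_combination (-(m:ℝ)) * h5
        rw [hγ₁def]
        rw [h2] at h1
        exact h1
    have : δ / (1 + δ) + 1 / (1 + δ) = 1 := by
      rw [← add_div, show δ + 1 = 1 + δ from add_comm δ 1, div_self h1δpos.ne']
    linarith [hγ₂lt]
  set A : ℝ := (5:ℝ) ^ m * c'' ^ γ₁ with hAdef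
  set C₂ : ℝ := MM P (X 0) δ ^ β * KK P (X 0) δ ^ γ₂ with hC₂def
  have hApos : 0 < A := by
    rw [hAdef]
    have : (0:ℝ) < c'' := lt_of_lt_of_le one_pos hc''1
    positivity
  have hC₂pos : 0 < C₂ := by
    rw [hC₂def]
    have h1 := MM_pos (P := P) (Y := X 0) (δ := δ)
    have h2 := KK_pos (P := P) (Y := X 0) hδ
    positivity
  -- pointwise bound on Ioo 0 T
  have hbound : ∀ u ∈ Set.Ioo (0:ℝ) T,
      thetaTilde P X u * ENNReal.ofReal (tailQ P (X 0) (GInv P (X 0) u)) ≤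
        ENNReal.ofReal (A * C₂) * ENNReal.ofReal (u ^ (-(γ₁ + γ₂))) := by
    rintro u ⟨hu0, huT⟩
    have hcu : 1 ≤ c'' / u := by
      rw [le_div_iff₀ hu0, one_mul]
      exact le_trans huT.le hc''T
    have h1 : thetaTilde P X u ≤ ENNReal.ofReal ((5:ℝ) ^ m * (c'' / u) ^ γ₁) :=
      thetaTilde_le hαpos hc''1 hu0 hcu hdecay''
    have h2 : ENNReal.ofReal (tailQ P (X 0) (GInv P (X 0) u)) ≤
        ENNReal.ofReal (C₂ * u ^ (-γ₂)) := by
      apply ENNReal.ofReal_le_ofReal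
      have := tailQ_GInv_le (hmeas 0) hδ hmom hu0 huT
      rw [hC₂def, mul_assoc]
      rw [← hβdef, ← hγ₂def] at this
      rw [mul_assoc] at this
      exact this
    calc thetaTilde P X u * ENNReal.ofReal (tailQ P (X 0) (GInv P (X 0) u)) ≤
          ENNReal.ofReal ((5:ℝ) ^ m * (c'' / u) ^ γ₁) * ENNReal.ofReal (C₂ * u ^ (-γ₂)) :=
        mul_le_mul' h1 h2
      _ = ENNReal.ofReal (A * C₂) * ENNReal.ofReal (u ^ (-(γ₁ + γ₂))) := by
          rw [← ENNReal.ofReal_mul (by positivity), ← ENNReal.ofReal_mul (by positivity)]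
          congr 1
          have hc''pos : (0:ℝ) < c'' := lt_of_lt_of_le one_pos hc''1
          rw [Real.div_rpow hc''pos.le hu0.le]
          rw [show -(γ₁ + γ₂) = -γ₁ + -γ₂ by ring, Real.rpow_add hu0,
            Real.rpow_neg hu0.le γ₁, hAdef]
          field_simp
  -- replace Ioc by Ioo
  have hres : volume.restrict (Set.Ioc (0:ℝ) T) = volume.restrict (Set.Ioo (0:ℝ) T) :=
    (Measure.restrict_congr_set MeasureTheory.Ioo_ae_eq_Ioc).symm
  rw [hres]
  -- bound the integral
  have hmain : (∫⁻ u in Set.Ioo (0:ℝ) T,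
      thetaTilde P X u * ENNReal.ofReal (tailQ P (X 0) (GInv P (X 0) u)) ∂volume) ≤
      ENNReal.ofReal (A * C₂) * ∫⁻ u in Set.Ioo (0:ℝ) T,
        ENNReal.ofReal (u ^ (-(γ₁ + γ₂))) ∂volume := by
    rw [← lintegral_const_mul' _ _ ENNReal.ofReal_ne_top]
    apply lintegral_mono_ae
    rw [ae_restrict_iff' measurableSet_Ioo]
    exact ae_of_all _ hbound
  refine lt_of_le_of_lt hmain ?_
  apply ENNReal.mul_lt_top ENNReal.ofReal_lt_top
  -- finiteness of the rpow integral
  have hII := intervalIntegral.intervalIntegrable_rpow'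
    (a := 0) (b := T) (show (-1:ℝ) < -(γ₁ + γ₂) by
      have : 0 ≤ γ₂ := by rw [hγ₂eq]; positivity
      linarith)
  rw [intervalIntegrable_iff, Set.uIoc_of_le hT0.le] at hII
  have hIO : IntegrableOn (fun u : ℝ => u ^ (-(γ₁ + γ₂))) (Set.Ioo 0 T) volume :=
    hII.mono_set Set.Ioo_subset_Ioc_self
  have hfin := hIO.hasFiniteIntegral
  apply lt_of_le_of_lt _ hfin
  apply lintegral_mono_ae
  exact ae_of_all _ (fun u => Real.ofReal_le_enorm _)

end
end

section
/- Let X = (X_t)_{t in Z^m} be a stationary centered real-valued random field with E[|X_0|^{2+delta}] < infinity for some delta > 0, whose theta-lex coefficients satisfy theta(h) = O(h^{-alpha}) for some alpha > m(1 + 1/delta). Then the projective criterion of Dedecker holds: the sum over k in V_0 of | E[ X_k * E[X_0 | sigma(X_l : l in V_0^{||k||_infty})] ] | is finite. -/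
open MeasureTheory Filter Topology

noncomputable section

/-- truncation -/
def clip (T x : ℝ) : ℝ := max (-T) (min T x)

lemma abs_clip_le {T : ℝ} (hT : 0 ≤ T) (x : ℝ) : |clip T x| ≤ T := by
  rw [abs_le]
  exact ⟨le_max_left _ _, max_le (by linarith) (min_le_left _ _)⟩

lemma clip_lip (T x y : ℝ) : |clip T x - clip T y| ≤ 1 * |x - y| := by
  rw [one_mul]
  unfold clip
  rw [max_comm (-T) (min T x), max_comm (-T) (min T y)]
  refine (abs_max_sub_max_le_abs _ _ _).trans ?_
  refine (abs_min_sub_min_le_max T x T y).trans ?_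
  simp

lemma clip_eq_self {T x : ℝ} (h : |x| ≤ T) : clip T x = x := by
  rw [abs_le] at h
  unfold clip
  rw [min_eq_right h.2, max_eq_right h.1]

lemma measurable_clip (T : ℝ) : Measurable (clip T) :=
  measurable_const.max (measurable_const.min measurable_id)

lemma abs_sub_clip_le_abs {T : ℝ} (hT : 0 ≤ T) (x : ℝ) : |x - clip T x| ≤ |x| := by
  rcases le_or_gt |x| T with h | h
  · rw [clip_eq_self h, sub_self, abs_zero]; exact abs_nonneg x
  · rcases lt_abs.mp h with h1 | h1
    · have hc : clip T x = T := by
        unfold clip; rw [min_eq_left h1.le, max_eq_right (by linarith)]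
      rw [hc, abs_of_nonneg (by linarith), abs_of_pos (by linarith)]
      linarith
    · have hc : clip T x = -T := by
        unfold clip; rw [min_eq_right (by linarith), max_eq_left (by linarith)]
      rw [hc, sub_neg_eq_add, abs_of_nonpos (by linarith), abs_of_neg (by linarith)]
      linarith

lemma resid_bound1 {T x δ : ℝ} (hδ : 0 < δ) (hT : 1 ≤ T) :
    |x - clip T x| ≤ |x| ^ (2 + δ) * T ^ (-(1 + δ)) := by
  have hT0 : (0:ℝ) < T := by linarith
  rcases le_or_gt |x| T with h | h
  · rw [clip_eq_self h, sub_self, abs_zero]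
    positivity
  · have hx0 : (0:ℝ) < |x| := by linarith
    have key : |x| * T ^ (1 + δ) ≤ |x| ^ (2 + δ) := by
      have h1 : T ^ (1 + δ) ≤ |x| ^ (1 + δ) :=
        Real.rpow_le_rpow hT0.le h.le (by linarith)
      have h2 : |x| * T ^ (1 + δ) ≤ |x| * |x| ^ (1 + δ) :=
        mul_le_mul_of_nonneg_left h1 (abs_nonneg x)
      have h3 : |x| * |x| ^ (1 + δ) = |x| ^ (2 + δ) := by
        have := Real.rpow_add hx0 1 (1 + δ)
        rw [Real.rpow_one] at this
        rw [← this]; congr 1; ring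
      linarith
    calc |x - clip T x| ≤ |x| := abs_sub_clip_le_abs (by linarith) x
      _ ≤ |x| ^ (2 + δ) * T ^ (-(1 + δ)) := by
          rw [Real.rpow_neg hT0.le, ← div_eq_mul_inv,
            le_div_iff₀ (Real.rpow_pos_of_pos hT0 _)]
          exact key

lemma resid_bound2 {T x δ : ℝ} (hδ : 0 < δ) (hT : 1 ≤ T) :
    (x - clip T x) ^ 2 ≤ |x| ^ (2 + δ) * T ^ (-δ) := by
  have hT0 : (0:ℝ) < T := by linarith
  rcases le_or_gt |x| T with h | h
  · rw [clip_eq_self h, sub_self]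
    have h0 : ((0:ℝ)) ^ 2 = 0 := by norm_num
    rw [h0]
    positivity
  · have hx0 : (0:ℝ) < |x| := by linarith
    have h1 : (x - clip T x) ^ 2 ≤ x ^ 2 := by
      have h2 := abs_sub_clip_le_abs (by linarith : (0:ℝ) ≤ T) x
      nlinarith [abs_nonneg (x - clip T x), sq_abs x, sq_abs (x - clip T x)]
    have key : x ^ 2 * T ^ δ ≤ |x| ^ (2 + δ) := by
      have h2 : T ^ δ ≤ |x| ^ δ := Real.rpow_le_rpow hT0.le h.le hδ.le
      have h3 : x ^ 2 * T ^ δ ≤ x ^ 2 * |x| ^ δ :=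
        mul_le_mul_of_nonneg_left h2 (sq_nonneg x)
      have h4 : x ^ 2 * |x| ^ δ = |x| ^ (2 + δ) := by
        have e1 : |x| ^ (2 + δ) = |x| ^ (1:ℝ) * |x| ^ (1 + δ) := by
          rw [← Real.rpow_add hx0]; congr 1; ring
        have e2 : |x| ^ (1 + δ) = |x| ^ (1:ℝ) * |x| ^ δ := by
          rw [← Real.rpow_add hx0]
        rw [e1, e2, Real.rpow_one, ← sq_abs x]; ring
      nlinarith [h3, h4]
    calc (x - clip T x) ^ 2 ≤ x ^ 2 := h1
      _ ≤ |x| ^ (2 + δ) * T ^ (-δ) := by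
          rw [Real.rpow_neg hT0.le, ← div_eq_mul_inv,
            le_div_iff₀ (Real.rpow_pos_of_pos hT0 _)]
          exact key

lemma aux_summable_int {γ : ℝ} (hγ : 1 < γ) :
    Summable (fun n : ℤ => (max 1 |(n:ℝ)|) ^ (-γ)) := by
  have h : Summable (fun n : ℤ => 1 / |(n:ℝ) + 2⁻¹| ^ γ) :=
    (Real.summable_one_div_int_add_rpow 2⁻¹ γ).mpr hγ
  refine Summable.of_nonneg_of_le (fun n => by positivity) (fun n => ?_) (h.mul_left ((3/2 : ℝ) ^ γ))
  set A : ℝ := max 1 |(n:ℝ)| with hA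
  set B : ℝ := |(n:ℝ) + 2⁻¹| with hB
  have hA1 : (1:ℝ) ≤ A := le_max_left _ _
  have hA0 : (0:ℝ) < A := by linarith
  have hB0 : (0:ℝ) < B := by
    rw [hB, abs_pos]
    intro hcontra
    have : (n:ℝ) = -2⁻¹ := by linarith
    have h2 : ((2:ℤ) * n : ℝ) = -1 := by push_cast; linarith
    have h3 : (2 * n : ℤ) = -1 := by exact_mod_cast h2
    omega
  have hBA : (2/3 : ℝ) * B ≤ A := by
    have h1 : B ≤ |(n:ℝ)| + |(2⁻¹:ℝ)| := abs_add_le _ _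
    have h1' : |(2⁻¹:ℝ)| = 2⁻¹ := by norm_num
    have h2 : |(n:ℝ)| ≤ A := le_max_right _ _
    nlinarith
  have h1 : ((2/3 : ℝ) * B) ^ γ ≤ A ^ γ :=
    Real.rpow_le_rpow (by positivity) hBA (by linarith)
  have h2 : ((2/3 : ℝ)) ^ γ * B ^ γ ≤ A ^ γ := by
    rwa [Real.mul_rpow (by norm_num) hB0.le] at h1
  have h23 : ((2/3 : ℝ)) ^ γ * ((3/2 : ℝ)) ^ γ = 1 := by
    rw [← Real.mul_rpow (by norm_num) (by norm_num)]
    norm_num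
  have hBγ : (0:ℝ) < B ^ γ := Real.rpow_pos_of_pos hB0 γ
  have h23pos : (0:ℝ) < ((2/3:ℝ)) ^ γ := Real.rpow_pos_of_pos (by norm_num) γ
  rw [Real.rpow_neg hA0.le]
  calc (A ^ γ)⁻¹ ≤ ((2/3 : ℝ) ^ γ * B ^ γ)⁻¹ := by
        apply inv_anti₀ (by positivity) h2
    _ = (3/2 : ℝ) ^ γ * (1 / B ^ γ) := by
        rw [mul_inv, one_div]
        congr 1
        rw [← Real.inv_rpow (by norm_num : (0:ℝ) ≤ 2/3)]
        norm_num

lemma aux_summable_pi (m : ℕ) : ∀ β : ℝ, (m:ℝ) < β →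
    Summable (fun x : Fin m → ℤ => (max 1 ‖x‖) ^ (-β)) := by
  induction m with
  | zero =>
    intro β hβ
    have : Finite (Fin 0 → ℤ) := by
      haveI : IsEmpty (Fin 0) := inferInstance
      infer_instance
    exact Summable.of_finite
  | succ m ih =>
    intro β hβ
    have hβ' : ((m:ℝ) + 1) < β := by push_cast at hβ; linarith
    set ε : ℝ := (β - (m+1))/2 with hεdef
    have hε0 : 0 < ε := by rw [hεdef]; linarith
    have he1 : (1:ℝ) < 1 + ε := by linarith
    have he2 : (m:ℝ) < m + ε := by linarith
    have hsum := (aux_summable_int he1).mul_of_nonneg (ih (m + ε) he2)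
      (fun n => by positivity) (fun x => by positivity)
    have hmaj : Summable (fun p : ℤ × (Fin m → ℤ) =>
        (max 1 ‖(Fin.cons p.1 p.2 : Fin (m+1) → ℤ)‖ : ℝ) ^ (-β)) := by
      refine Summable.of_nonneg_of_le (fun p => by positivity) (fun p => ?_) hsum
      set a : ℤ := p.1
      set x : Fin m → ℤ := p.2
      set A : ℝ := max 1 ‖(Fin.cons a x : Fin (m+1) → ℤ)‖ with hAdef
      have hA1 : (1:ℝ) ≤ A := le_max_left _ _
      have hA0 : (0:ℝ) < A := by linarith
      have hu0 : (0:ℝ) < max 1 |(a:ℝ)| := lt_of_lt_of_le one_pos (le_max_left _ _)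
      have hv0 : (0:ℝ) < max 1 ‖x‖ := lt_of_lt_of_le one_pos (le_max_left _ _)
      have hu : max 1 |(a:ℝ)| ≤ A := by
        refine max_le_max le_rfl ?_
        have h1 : ‖(Fin.cons a x : Fin (m+1) → ℤ) 0‖ ≤ ‖(Fin.cons a x : Fin (m+1) → ℤ)‖ :=
          norm_le_pi_norm ((Fin.cons a x : Fin (m+1) → ℤ)) 0
        rwa [Fin.cons_zero, Int.norm_eq_abs] at h1
      have hv : max 1 ‖x‖ ≤ A := by
        refine max_le_max le_rfl ?_
        refine (pi_norm_le_iff_of_nonneg (norm_nonneg _)).mpr fun i => ?_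
        have h1 : ‖(Fin.cons a x : Fin (m+1) → ℤ) i.succ‖ ≤ ‖(Fin.cons a x : Fin (m+1) → ℤ)‖ :=
          norm_le_pi_norm ((Fin.cons a x : Fin (m+1) → ℤ)) i.succ
        rwa [Fin.cons_succ] at h1
      calc A ^ (-β) = A ^ (-(1+ε)) * A ^ (-((m:ℝ)+ε)) := by
            rw [← Real.rpow_add hA0]; congr 1; rw [hεdef]; push_cast; ring
        _ ≤ (max 1 |(a:ℝ)|) ^ (-(1+ε)) * (max 1 ‖x‖) ^ (-((m:ℝ)+ε)) := by
            refine mul_le_mul (Real.rpow_le_rpow_of_nonpos hu0 hu (by linarith))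
              (Real.rpow_le_rpow_of_nonpos hv0 hv (by linarith)) (by positivity) (by positivity)
    exact (Equiv.summable_iff (Fin.consEquiv (fun _ : Fin (m+1) => ℤ))).mp hmaj

lemma cov_step {Ω : Type*} [MeasurableSpace Ω] (P : Measure Ω) [IsProbabilityMeasure P]
    (ξ η : Ω → ℝ) (hξ : Measurable ξ) (hη : Measurable η)
    (δ M T cb : ℝ) (hδ : 0 < δ) (hT : 1 ≤ T)
    (hMξ : Integrable (fun ω => |ξ ω| ^ (2 + δ)) P)
    (hMη : Integrable (fun ω => |η ω| ^ (2 + δ)) P)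
    (hEξ : ∫ ω, |ξ ω| ^ (2 + δ) ∂P = M)
    (hEη : ∫ ω, |η ω| ^ (2 + δ) ∂P = M)
    (hcξ : ∫ ω, ξ ω ∂P = 0) (hcη : ∫ ω, η ω ∂P = 0)
    (hIξ : Integrable ξ P) (hIη : Integrable η P)
    (hIp : Integrable (fun ω => ξ ω * η ω) P)
    (hcov : |cov P (fun ω => clip T (ξ ω)) (fun ω => clip T (η ω))| ≤ cb) :
    |∫ ω, ξ ω * η ω ∂P| ≤ cb + (M ^ 2 + 3 * M) * T ^ (-δ) := by
  have hT0 : (0:ℝ) < T := by linarith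
  have hM0 : (0:ℝ) ≤ M := by
    rw [← hEξ]; exact integral_nonneg fun ω => by positivity
  set f1 : Ω → ℝ := fun ω => clip T (ξ ω) with hf1
  set g1 : Ω → ℝ := fun ω => clip T (η ω) with hg1
  set f2 : Ω → ℝ := fun ω => ξ ω - f1 ω with hf2
  set g2 : Ω → ℝ := fun ω => η ω - g1 ω with hg2
  have mf1 : Measurable f1 := (measurable_clip T).comp hξ
  have mg1 : Measurable g1 := (measurable_clip T).comp hη
  have mf2 : Measurable f2 := hξ.sub mf1
  have mg2 : Measurable g2 := hη.sub mg1
  have bddf1 : ∃ C, ∀ ω, ‖f1 ω‖ ≤ C :=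
    ⟨T, fun ω => by rw [Real.norm_eq_abs]; exact abs_clip_le hT0.le _⟩
  have bddg1 : ∃ C, ∀ ω, ‖g1 ω‖ ≤ C :=
    ⟨T, fun ω => by rw [Real.norm_eq_abs]; exact abs_clip_le hT0.le _⟩
  have if1 : Integrable f1 P := by
    refine (integrable_const T).mono' mf1.aestronglyMeasurable (ae_of_all _ fun ω => ?_)
    rw [Real.norm_eq_abs]; exact abs_clip_le hT0.le _
  have ig1 : Integrable g1 P := by
    refine (integrable_const T).mono' mg1.aestronglyMeasurable (ae_of_all _ fun ω => ?_)
    rw [Real.norm_eq_abs]; exact abs_clip_le hT0.le _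
  have if2 : Integrable f2 P := hIξ.sub if1
  have ig2 : Integrable g2 P := hIη.sub ig1
  have rb1ξ : ∀ ω, |f2 ω| ≤ |ξ ω| ^ (2 + δ) * T ^ (-(1 + δ)) := fun ω =>
    resid_bound1 hδ hT
  have rb1η : ∀ ω, |g2 ω| ≤ |η ω| ^ (2 + δ) * T ^ (-(1 + δ)) := fun ω =>
    resid_bound1 hδ hT
  have rb2ξ : ∀ ω, f2 ω ^ 2 ≤ |ξ ω| ^ (2 + δ) * T ^ (-δ) := fun ω =>
    resid_bound2 hδ hT
  have rb2η : ∀ ω, g2 ω ^ 2 ≤ |η ω| ^ (2 + δ) * T ^ (-δ) := fun ω =>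
    resid_bound2 hδ hT
  have mean_f2 : ∫ ω, |f2 ω| ∂P ≤ M * T ^ (-(1 + δ)) := by
    have h := integral_mono if2.abs (hMξ.mul_const (T ^ (-(1 + δ)))) rb1ξ
    rwa [integral_mul_const, hEξ] at h
  have mean_g2 : ∫ ω, |g2 ω| ∂P ≤ M * T ^ (-(1 + δ)) := by
    have h := integral_mono ig2.abs (hMη.mul_const (T ^ (-(1 + δ)))) rb1η
    rwa [integral_mul_const, hEη] at h
  have int_f1 : |∫ ω, f1 ω ∂P| ≤ M * T ^ (-(1 + δ)) := by
    have hsub : ∫ ω, f2 ω ∂P = (∫ ω, ξ ω ∂P) - ∫ ω, f1 ω ∂P := integral_sub hIξ if1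
    rw [hcξ, zero_sub] at hsub
    have h2 : |∫ ω, f2 ω ∂P| ≤ ∫ ω, |f2 ω| ∂P := by
      simpa only [Real.norm_eq_abs] using norm_integral_le_integral_norm (μ := P) f2
    rw [hsub, abs_neg] at h2
    linarith
  have int_g1 : |∫ ω, g1 ω ∂P| ≤ M * T ^ (-(1 + δ)) := by
    have hsub : ∫ ω, g2 ω ∂P = (∫ ω, η ω ∂P) - ∫ ω, g1 ω ∂P := integral_sub hIη ig1
    rw [hcη, zero_sub] at hsub
    have h2 : |∫ ω, g2 ω ∂P| ≤ ∫ ω, |g2 ω| ∂P := by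
      simpa only [Real.norm_eq_abs] using norm_integral_le_integral_norm (μ := P) g2
    rw [hsub, abs_neg] at h2
    linarith
  have ip11 : Integrable (fun ω => f1 ω * g1 ω) P :=
    ig1.bdd_mul mf1.aestronglyMeasurable (ae_of_all _ bddf1.choose_spec)
  have ip12 : Integrable (fun ω => f1 ω * g2 ω) P :=
    ig2.bdd_mul mf1.aestronglyMeasurable (ae_of_all _ bddf1.choose_spec)
  have ip21 : Integrable (fun ω => f2 ω * g1 ω) P := by
    have h := if2.bdd_mul mg1.aestronglyMeasurable (ae_of_all _ bddg1.choose_spec)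
    exact h.congr (ae_of_all _ fun ω => mul_comm _ _)
  have hle22 : ∀ ω, |f2 ω * g2 ω| ≤ (|ξ ω| ^ (2 + δ) + |η ω| ^ (2 + δ)) * (T ^ (-δ) / 2) := by
    intro ω
    rw [abs_mul]
    nlinarith [rb2ξ ω, rb2η ω, sq_nonneg (|f2 ω| - |g2 ω|), sq_abs (f2 ω), sq_abs (g2 ω),
      abs_nonneg (f2 ω), abs_nonneg (g2 ω)]
  have iSum : Integrable (fun ω => |ξ ω| ^ (2 + δ) + |η ω| ^ (2 + δ)) P := hMξ.add hMη
  have ip22 : Integrable (fun ω => f2 ω * g2 ω) P := by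
    refine (iSum.mul_const (T ^ (-δ) / 2)).mono'
      ((mf2.mul mg2).aestronglyMeasurable) (ae_of_all _ fun ω => ?_)
    rw [Real.norm_eq_abs]
    exact hle22 ω
  have prod22 : ∫ ω, |f2 ω * g2 ω| ∂P ≤ M * T ^ (-δ) := by
    have h := integral_mono ip22.abs (iSum.mul_const (T ^ (-δ) / 2)) hle22
    rw [integral_mul_const, integral_add hMξ hMη, hEξ, hEη] at h
    calc ∫ ω, |f2 ω * g2 ω| ∂P ≤ (M + M) * (T ^ (-δ) / 2) := h
      _ = M * T ^ (-δ) := by ring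
  have hTT : T ^ (-(1 + δ)) * T = T ^ (-δ) := by
    have h := Real.rpow_add hT0 (-(1 + δ)) 1
    rw [Real.rpow_one] at h
    rw [← h]; congr 1; ring
  have prod12 : ∫ ω, |f1 ω * g2 ω| ∂P ≤ M * T ^ (-δ) := by
    have hle : ∀ ω, |f1 ω * g2 ω| ≤ |g2 ω| * T := by
      intro ω
      rw [abs_mul]
      have h1 : |f1 ω| ≤ T := abs_clip_le hT0.le _
      have h2 := abs_nonneg (g2 ω)
      nlinarith
    have h := integral_mono ip12.abs (ig2.abs.mul_const T) hle
    rw [integral_mul_const] at h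
    calc ∫ ω, |f1 ω * g2 ω| ∂P ≤ (∫ ω, |g2 ω| ∂P) * T := h
      _ ≤ (M * T ^ (-(1 + δ))) * T := mul_le_mul_of_nonneg_right mean_g2 hT0.le
      _ = M * (T ^ (-(1 + δ)) * T) := by ring
      _ = M * T ^ (-δ) := by rw [hTT]
  have prod21 : ∫ ω, |f2 ω * g1 ω| ∂P ≤ M * T ^ (-δ) := by
    have hle : ∀ ω, |f2 ω * g1 ω| ≤ |f2 ω| * T := by
      intro ω
      rw [abs_mul]
      have h1 : |g1 ω| ≤ T := abs_clip_le hT0.le _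
      have h2 := abs_nonneg (f2 ω)
      nlinarith
    have h := integral_mono ip21.abs (if2.abs.mul_const T) hle
    rw [integral_mul_const] at h
    calc ∫ ω, |f2 ω * g1 ω| ∂P ≤ (∫ ω, |f2 ω| ∂P) * T := h
      _ ≤ (M * T ^ (-(1 + δ))) * T := mul_le_mul_of_nonneg_right mean_f2 hT0.le
      _ = M * (T ^ (-(1 + δ)) * T) := by ring
      _ = M * T ^ (-δ) := by rw [hTT]
  have split : ∫ ω, ξ ω * η ω ∂P = (∫ ω, f1 ω * g1 ω ∂P) + (∫ ω, f1 ω * g2 ω ∂P)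
      + (∫ ω, f2 ω * g1 ω ∂P) + (∫ ω, f2 ω * g2 ω ∂P) := by
    have ipA : Integrable (fun ω => f1 ω * g1 ω + f1 ω * g2 ω) P := ip11.add ip12
    have ipB : Integrable (fun ω => f1 ω * g1 ω + f1 ω * g2 ω + f2 ω * g1 ω) P := ipA.add ip21
    rw [← integral_add ip11 ip12, ← integral_add ipA ip21, ← integral_add ipB ip22]
    refine integral_congr_ae (ae_of_all _ fun ω => ?_)
    simp only [hf2, hg2, hf1, hg1]
    ring
  have covdef : ∫ ω, f1 ω * g1 ω ∂P
      = cov P f1 g1 + (∫ ω, f1 ω ∂P) * (∫ ω, g1 ω ∂P) := by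
    simp only [cov]; ring
  have n12 : |∫ ω, f1 ω * g2 ω ∂P| ≤ ∫ ω, |f1 ω * g2 ω| ∂P := by
    simpa only [Real.norm_eq_abs] using
      norm_integral_le_integral_norm (μ := P) (fun ω => f1 ω * g2 ω)
  have n21 : |∫ ω, f2 ω * g1 ω ∂P| ≤ ∫ ω, |f2 ω * g1 ω| ∂P := by
    simpa only [Real.norm_eq_abs] using
      norm_integral_le_integral_norm (μ := P) (fun ω => f2 ω * g1 ω)
  have n22 : |∫ ω, f2 ω * g2 ω ∂P| ≤ ∫ ω, |f2 ω * g2 ω| ∂P := by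
    simpa only [Real.norm_eq_abs] using
      norm_integral_le_integral_norm (μ := P) (fun ω => f2 ω * g2 ω)
  have hmean2 : |∫ ω, f1 ω ∂P| * |∫ ω, g1 ω ∂P| ≤ M ^ 2 * T ^ (-δ) := by
    have h1 : |∫ ω, f1 ω ∂P| * |∫ ω, g1 ω ∂P| ≤ (M * T ^ (-(1 + δ))) * (M * T ^ (-(1 + δ))) :=
      mul_le_mul int_f1 int_g1 (abs_nonneg _) (by positivity)
    have h2 : T ^ (-(1 + δ)) * T ^ (-(1 + δ)) ≤ T ^ (-δ) := by
      rw [← Real.rpow_add hT0]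
      exact Real.rpow_le_rpow_of_exponent_le hT (by linarith)
    calc |∫ ω, f1 ω ∂P| * |∫ ω, g1 ω ∂P| ≤ (M * T ^ (-(1 + δ))) * (M * T ^ (-(1 + δ))) := h1
      _ = M ^ 2 * (T ^ (-(1 + δ)) * T ^ (-(1 + δ))) := by ring
      _ ≤ M ^ 2 * T ^ (-δ) := mul_le_mul_of_nonneg_left h2 (sq_nonneg M)
  have final : |∫ ω, ξ ω * η ω ∂P| ≤ |cov P f1 g1| + |∫ ω, f1 ω ∂P| * |∫ ω, g1 ω ∂P|
      + |∫ ω, f1 ω * g2 ω ∂P| + |∫ ω, f2 ω * g1 ω ∂P| + |∫ ω, f2 ω * g2 ω ∂P| := by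
    rw [split, covdef]
    calc |cov P f1 g1 + (∫ ω, f1 ω ∂P) * (∫ ω, g1 ω ∂P) + (∫ ω, f1 ω * g2 ω ∂P)
          + (∫ ω, f2 ω * g1 ω ∂P) + (∫ ω, f2 ω * g2 ω ∂P)|
        ≤ |cov P f1 g1 + (∫ ω, f1 ω ∂P) * (∫ ω, g1 ω ∂P) + (∫ ω, f1 ω * g2 ω ∂P)
          + (∫ ω, f2 ω * g1 ω ∂P)| + |∫ ω, f2 ω * g2 ω ∂P| := abs_add_le _ _
      _ ≤ |cov P f1 g1 + (∫ ω, f1 ω ∂P) * (∫ ω, g1 ω ∂P) + (∫ ω, f1 ω * g2 ω ∂P)|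
          + |∫ ω, f2 ω * g1 ω ∂P| + |∫ ω, f2 ω * g2 ω ∂P| := by
          have := abs_add_le (cov P f1 g1 + (∫ ω, f1 ω ∂P) * (∫ ω, g1 ω ∂P)
            + (∫ ω, f1 ω * g2 ω ∂P)) (∫ ω, f2 ω * g1 ω ∂P)
          linarith
      _ ≤ |cov P f1 g1 + (∫ ω, f1 ω ∂P) * (∫ ω, g1 ω ∂P)| + |∫ ω, f1 ω * g2 ω ∂P|
          + |∫ ω, f2 ω * g1 ω ∂P| + |∫ ω, f2 ω * g2 ω ∂P| := by
          have := abs_add_le (cov P f1 g1 + (∫ ω, f1 ω ∂P) * (∫ ω, g1 ω ∂P)) (∫ ω, f1 ω * g2 ω ∂P)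
          linarith
      _ ≤ |cov P f1 g1| + |∫ ω, f1 ω ∂P| * |∫ ω, g1 ω ∂P| + |∫ ω, f1 ω * g2 ω ∂P|
          + |∫ ω, f2 ω * g1 ω ∂P| + |∫ ω, f2 ω * g2 ω ∂P| := by
          have h := abs_add_le (cov P f1 g1) ((∫ ω, f1 ω ∂P) * (∫ ω, g1 ω ∂P))
          rw [abs_mul] at h
          linarith
  have hTd0 : (0:ℝ) ≤ T ^ (-δ) := by positivity
  calc |∫ ω, ξ ω * η ω ∂P| ≤ |cov P f1 g1| + |∫ ω, f1 ω ∂P| * |∫ ω, g1 ω ∂P|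
      + |∫ ω, f1 ω * g2 ω ∂P| + |∫ ω, f2 ω * g1 ω ∂P| + |∫ ω, f2 ω * g2 ω ∂P| := final
    _ ≤ cb + (M ^ 2 + 3 * M) * T ^ (-δ) := by
        have e12 := n12.trans prod12
        have e21 := n21.trans prod21
        have e22 := n22.trans prod22
        nlinarith [hcov, hmean2]


lemma sq_le_one_add_rpow {δ : ℝ} (hδ : 0 < δ) (a : ℝ) : a ^ 2 ≤ 1 + |a| ^ (2 + δ) := by
  have hnn : (0:ℝ) ≤ |a| ^ (2 + δ) := Real.rpow_nonneg (abs_nonneg a) _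
  rcases le_or_gt |a| 1 with h | h
  · nlinarith [sq_abs a, abs_nonneg a]
  · have e : |a| ^ ((2:ℝ)) ≤ |a| ^ (2 + δ) :=
      Real.rpow_le_rpow_of_exponent_le h.le (by linarith)
    have e2 : |a| ^ ((2:ℝ)) = a ^ 2 := by
      rw [show ((2:ℝ)) = ((2:ℕ):ℝ) by norm_num, Real.rpow_natCast, sq_abs]
    linarith
lemma abs_le_one_add_rpow {δ : ℝ} (hδ : 0 < δ) (a : ℝ) : |a| ≤ 1 + |a| ^ (2 + δ) := by
  have hnn : (0:ℝ) ≤ |a| ^ (2 + δ) := Real.rpow_nonneg (abs_nonneg a) _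
  rcases le_or_gt |a| 1 with h | h
  · linarith
  · have e : |a| ^ ((1:ℝ)) ≤ |a| ^ (2 + δ) :=
      Real.rpow_le_rpow_of_exponent_le h.le (by linarith)
    rw [Real.rpow_one] at e
    linarith
lemma abs_mul_le_one_add {δ : ℝ} (hδ : 0 < δ) (a b : ℝ) :
    |a * b| ≤ 1 + |a| ^ (2 + δ) + |b| ^ (2 + δ) := by
  have h1 := sq_le_one_add_rpow hδ a
  have h2 := sq_le_one_add_rpow hδ b
  rw [abs_mul]
  have key : 2 * (|a| * |b|) ≤ a ^ 2 + b ^ 2 := by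
    nlinarith [sq_nonneg (|a| - |b|), sq_abs a, sq_abs b]
  have hnnA : (0:ℝ) ≤ |a| ^ (2 + δ) := Real.rpow_nonneg (abs_nonneg a) _
  have hnnB : (0:ℝ) ≤ |b| ^ (2 + δ) := Real.rpow_nonneg (abs_nonneg b) _
  linarith

/-- If a stationary centered random field has a `(2+δ)`-th moment and θ-lex coefficients
of order `O(h^{-α})` with `α > m(1 + 1/δ)`, then Dedecker's projective criterion holds:
`∑_{k ∈ V_0} |E[X_k E[X_0 | σ(X_l : l ∈ V_0^{‖k‖_∞})]]| < ∞`. -/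
theorem projective_criterion_of_theta_decay
    {Ω : Type*} [MeasurableSpace Ω] (P : Measure Ω) [IsProbabilityMeasure P]
    {m : ℕ} (X : (Fin m → ℤ) → Ω → ℝ) (hmeas : ∀ t, Measurable (X t))
    (hstat : Stationary P X) (hcent : ∀ t, ∫ ω, X t ω ∂P = 0)
    (δ : ℝ) (hδ : 0 < δ) (hmom : Integrable (fun ω => |X 0 ω| ^ (2 + δ)) P)
    (α : ℝ) (hα : (m : ℝ) * (1 + 1 / δ) < α)
    (hθ : ∃ c : ℝ, HasThetaLexBound P X (fun h => c * h ^ (-α))) :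
    Summable (fun k : {k : Fin m → ℤ // lexLe k 0} =>
      |∫ ω, X (k : Fin m → ℤ) ω *
        MeasureTheory.condExp (sigmaOn X (VSet 0 ‖(k : Fin m → ℤ)‖)) P (X 0) ω ∂P|) := by
  classical
  obtain ⟨c, hc⟩ := hθ
  have hg_meas : Measurable fun t : ℝ => |t| ^ (2 + δ) :=
    ((Real.continuous_rpow_const (by linarith : (0:ℝ) ≤ 2 + δ)).comp continuous_abs).measurable
  have key : ∀ k : Fin m → ℤ, Measure.map (X k) P = Measure.map (X 0) P := by
    intro k
    have h := hstat k 1 (fun _ => 0)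
    have h0 : (fun ω (i : Fin 1) => X ((fun _ : Fin 1 => (0 : Fin m → ℤ)) i + k) ω)
        = fun ω (_ : Fin 1) => X k ω := by
      funext ω i; simp
    rw [h0] at h
    have h2 := congrArg (Measure.map (fun v : Fin 1 → ℝ => v 0)) h
    rwa [Measure.map_map (measurable_pi_apply 0) (measurable_pi_lambda _ fun _ => hmeas k),
      Measure.map_map (measurable_pi_apply 0) (measurable_pi_lambda _ fun _ => hmeas 0)] at h2
  set M : ℝ := ∫ ω, |X 0 ω| ^ (2 + δ) ∂P with hMdef
  have momI : ∀ k, Integrable (fun ω => |X k ω| ^ (2 + δ)) P := by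
    intro k
    have h1 : Integrable (fun t : ℝ => |t| ^ (2 + δ)) (Measure.map (X k) P) := by
      rw [key k, integrable_map_measure hg_meas.aestronglyMeasurable (hmeas 0).aemeasurable]
      exact hmom
    rw [integrable_map_measure hg_meas.aestronglyMeasurable (hmeas k).aemeasurable] at h1
    exact h1
  have momE : ∀ k, ∫ ω, |X k ω| ^ (2 + δ) ∂P = M := by
    intro k
    have e1 := integral_map (μ := P) (hmeas k).aemeasurable
      (f := fun t : ℝ => |t| ^ (2 + δ)) hg_meas.aestronglyMeasurable
    have e2 := integral_map (μ := P) (hmeas 0).aemeasurable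
      (f := fun t : ℝ => |t| ^ (2 + δ)) hg_meas.aestronglyMeasurable
    rw [key k] at e1
    rw [hMdef]
    exact e1.symm.trans e2
  have hM0 : (0:ℝ) ≤ M := by
    rw [hMdef]; exact integral_nonneg fun ω => by positivity
  have hInt1 : ∀ k, Integrable (X k) P := by
    intro k
    refine ((integrable_const 1).add (momI k)).mono' (hmeas k).aestronglyMeasurable
      (ae_of_all _ fun ω => ?_)
    rw [Real.norm_eq_abs]
    exact abs_le_one_add_rpow hδ (X k ω)
  have hInt2 : ∀ k l, Integrable (fun ω => X k ω * X l ω) P := by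
    intro k l
    refine (((integrable_const 1).add (momI k)).add (momI l)).mono'
      ((hmeas k).mul (hmeas l)).aestronglyMeasurable (ae_of_all _ fun ω => ?_)
    rw [Real.norm_eq_abs]
    exact abs_mul_le_one_add hδ _ _
  set β : ℝ := α * δ / (1 + δ) with hβdef
  have hδ1 : (0:ℝ) < 1 + δ := by linarith
  have hβm : (m:ℝ) < β := by
    rw [hβdef, lt_div_iff₀ hδ1]
    have hδ' : δ ≠ 0 := ne_of_gt hδ
    have h0 : (1:ℝ)/δ * δ = 1 := div_mul_cancel₀ 1 hδ'
    have h1 : (m:ℝ) * (1 + 1/δ) * δ = (m:ℝ) * (1 + δ) := by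
      linear_combination (m:ℝ) * h0
    have h2 := mul_lt_mul_of_pos_right hα hδ
    linarith
  have hα0 : (0:ℝ) < α := lt_of_le_of_lt (by positivity) hα
  set C : ℝ := |c| + M ^ 2 + 3 * M + (1 + M) with hCdef
  refine Summable.of_nonneg_of_le (fun k => abs_nonneg _) (fun k => ?_)
    (((aux_summable_pi m β hβm).mul_left C).comp_injective Subtype.val_injective)
  obtain ⟨k, hk⟩ := k
  show |∫ ω, X k ω * MeasureTheory.condExp (sigmaOn X (VSet 0 ‖k‖)) P (X 0) ω ∂P|
    ≤ C * (max 1 ‖k‖) ^ (-β)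
  have hkmem : k ∈ VSet 0 ‖k‖ := ⟨hk, by rw [zero_sub, norm_neg]⟩
  have hFle : sigmaOn X (VSet 0 ‖k‖) ≤ (inferInstance : MeasurableSpace Ω) :=
    iSup_le fun s => iSup_le fun _ => (hmeas s).comap_le
  haveI hSF : SigmaFinite (P.trim hFle) := inferInstance
  have hXkF : StronglyMeasurable[sigmaOn X (VSet 0 ‖k‖)] (X k) := by
    refine Measurable.stronglyMeasurable (Measurable.of_comap_le ?_)
    exact le_iSup₂ (f := fun s (_ : s ∈ VSet 0 ‖k‖) =>
      MeasurableSpace.comap (X s) inferInstance) k hkmem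
  have hmul := condExp_mul_of_stronglyMeasurable_left (μ := P) hXkF
    (show Integrable ((X k) * (X 0)) P from hInt2 k 0) (hInt1 0)
  have pull : ∫ ω, X k ω * MeasureTheory.condExp (sigmaOn X (VSet 0 ‖k‖)) P (X 0) ω ∂P
      = ∫ ω, X k ω * X 0 ω ∂P := by
    have e1 : ∫ ω, X k ω * MeasureTheory.condExp (sigmaOn X (VSet 0 ‖k‖)) P (X 0) ω ∂P
        = ∫ ω, MeasureTheory.condExp (sigmaOn X (VSet 0 ‖k‖)) P ((X k) * (X 0)) ω ∂P := by
      refine integral_congr_ae ?_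
      filter_upwards [hmul] with ω hω
      exact hω.symm
    have e2 := integral_condExp (μ := P) hFle (f := (X k) * (X 0))
    rw [e1, e2]
    rfl
  rw [pull]
  by_cases hk0 : k = (0 : Fin m → ℤ)
  · subst hk0
    have hb : ∀ ω, |X 0 ω * X 0 ω| ≤ 1 + |X 0 ω| ^ (2 + δ) := by
      intro ω
      rw [abs_mul]
      nlinarith [sq_le_one_add_rpow hδ (X 0 ω), sq_abs (X 0 ω), abs_nonneg (X 0 ω)]
    have h2 : |∫ ω, X 0 ω * X 0 ω ∂P| ≤ ∫ ω, |X 0 ω * X 0 ω| ∂P := by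
      simpa only [Real.norm_eq_abs] using
        norm_integral_le_integral_norm (μ := P) (fun ω => X 0 ω * X 0 ω)
    have iSum0 : Integrable (fun ω => (1:ℝ) + |X 0 ω| ^ (2 + δ)) P :=
      (integrable_const 1).add (momI 0)
    have h3 := integral_mono (hInt2 0 0).abs iSum0 hb
    have h4 : ∫ ω, ((1:ℝ) + |X 0 ω| ^ (2 + δ)) ∂P = 1 + M := by
      rw [integral_add (integrable_const 1) (momI 0), momE 0]
      simp
    rw [norm_zero, max_eq_left (by norm_num : (0:ℝ) ≤ 1), Real.one_rpow, mul_one, hCdef]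
    have habs := abs_nonneg c
    nlinarith [h2, h3.trans_eq h4, sq_nonneg M]
  · have hk1 : (1:ℝ) ≤ ‖k‖ := by
      obtain ⟨i, hi⟩ := Function.ne_iff.mp hk0
      have h1 : ‖k i‖ ≤ ‖k‖ := norm_le_pi_norm k i
      have h2 : (1:ℝ) ≤ ‖k i‖ := by
        rw [Int.norm_eq_abs]
        exact_mod_cast Int.one_le_abs hi
      linarith
    have hkpos : (0:ℝ) < ‖k‖ := by linarith
    set T : ℝ := ‖k‖ ^ (α / (1 + δ)) with hTdef
    have hT1 : (1:ℝ) ≤ T := by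
      rw [hTdef]; exact Real.one_le_rpow hk1 (by positivity)
    have hT0 : (0:ℝ) < T := by linarith
    have hcov : |cov P (fun ω => clip T (X k ω)) (fun ω => clip T (X 0 ω))|
        ≤ c * ‖k‖ ^ (-α) * T * 1 :=
      hc ‖k‖ hkpos 1 0 (fun _ => k) (fun a b _ => Subsingleton.elim a b)
        (fun _ => hkmem)
        (fun v : Fin 1 → ℝ => clip T (v 0)) (clip T) T 1
        ((measurable_clip T).comp (measurable_pi_apply 0))
        (fun v => abs_clip_le hT0.le _)
        (measurable_clip T) ⟨T, fun x => abs_clip_le hT0.le x⟩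
        (fun x y => clip_lip T x y)
    have hcov' : |cov P (fun ω => clip T (X k ω)) (fun ω => clip T (X 0 ω))|
        ≤ |c| * ‖k‖ ^ (-α) * T := by
      refine hcov.trans ?_
      rw [mul_one]
      have h1 : (0:ℝ) ≤ ‖k‖ ^ (-α) := Real.rpow_nonneg (norm_nonneg _) _
      exact mul_le_mul_of_nonneg_right
        (mul_le_mul_of_nonneg_right (le_abs_self c) h1) hT0.le
    have main := cov_step P (X k) (X 0) (hmeas k) (hmeas 0) δ M T
      (|c| * ‖k‖ ^ (-α) * T) hδ hT1 (momI k) (momI 0) (momE k) (momE 0)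
      (hcent k) (hcent 0) (hInt1 k) (hInt1 0) (hInt2 k 0) hcov'
    have hcol1 : ‖k‖ ^ (-α) * T = ‖k‖ ^ (-β) := by
      rw [hTdef, ← Real.rpow_add hkpos]
      congr 1
      rw [hβdef]; field_simp; ring
    have hcol2 : T ^ (-δ) = ‖k‖ ^ (-β) := by
      rw [hTdef, ← Real.rpow_mul (norm_nonneg k)]
      congr 1
      rw [hβdef]; field_simp
    calc |∫ ω, X k ω * X 0 ω ∂P|
        ≤ |c| * ‖k‖ ^ (-α) * T + (M ^ 2 + 3 * M) * T ^ (-δ) := main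
      _ = (|c| + M ^ 2 + 3 * M) * ‖k‖ ^ (-β) := by
          rw [mul_assoc, hcol1, hcol2]; ring
      _ ≤ C * (max 1 ‖k‖) ^ (-β) := by
          rw [max_eq_right hk1, hCdef]
          have h1 : (0:ℝ) ≤ ‖k‖ ^ (-β) := Real.rpow_nonneg (norm_nonneg _) _
          nlinarith [hM0]

end
end
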